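/- arXiv:1304.7957 — 6 statements merged into one kernel-verified Lean document; each statement's English description precedes it below -/
import Mathlib

section
/- Let G be a finite abelian group and let S be a sequence of elements of G of length |G| + D(G) - 1, where D(G) is the Davenport constant of G. Then S contains a subsequence of length exactly |G| whose sum is zero in G. -/
open Finset

/-- `D` is the Davenport constant of `G`: the least `d > 0` such that every
sequence (multiset) of `d` elements of `G` has a nonempty zero-sum subsequence. -/
def IsDavenport (G : Type*) [AddCommGroup G] (D : ℕ) : Prop :=
  IsLeast {d : ℕ | 0 < d ∧ ∀ S : Multiset G, Multiset.card S = d →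
    ∃ T, T ≤ S ∧ T ≠ 0 ∧ T.sum = 0} D

/-- `s` is the generalized EGZ invariant `s_m(G)`: the least `d > 0` such that every
sequence of `d` elements of `G` has a zero-sum subsequence of length exactly `m`. -/
def IsEGZConst (G : Type*) [AddCommGroup G] (m s : ℕ) : Prop :=
  IsLeast {d : ℕ | 0 < d ∧ ∀ S : Multiset G, Multiset.card S = d →
    ∃ T, T ≤ S ∧ Multiset.card T = m ∧ T.sum = 0} s

/-- The coloring `c` admits a zero-sum hyperstar: `m` distinct `r`-sets with a common
vertex whose colors sum to zero. -/
def HasZeroSumStar (G : Type*) [AddCommGroup G] (r m d : ℕ)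
    (c : Finset (Fin d) → G) : Prop :=
  ∃ v : Fin d, ∃ F : Finset (Finset (Fin d)), F.card = m ∧
    (∀ e ∈ F, e.card = r ∧ v ∈ e) ∧ ∑ e ∈ F, c e = 0

/-- The coloring `c` admits a zero-sum intersecting family: `m` distinct `r`-sets with
pairwise nonempty intersections whose colors sum to zero. -/
def HasZeroSumIntersecting (G : Type*) [AddCommGroup G] (r m d : ℕ)
    (c : Finset (Fin d) → G) : Prop :=
  ∃ F : Finset (Finset (Fin d)), F.card = m ∧ (∀ e ∈ F, e.card = r) ∧
    (∀ e ∈ F, ∀ f ∈ F, (e ∩ f).Nonempty) ∧ ∑ e ∈ F, c e = 0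

/-- The coloring `c` admits a zero-sum delta-system of type `S(r,q,m)`: `m` distinct
`r`-sets whose pairwise intersections all equal a fixed `q`-set `Q`, with zero color sum. -/
def HasZeroSumDelta (G : Type*) [AddCommGroup G] (r q m d : ℕ)
    (c : Finset (Fin d) → G) : Prop :=
  ∃ Q : Finset (Fin d), Q.card = q ∧ ∃ F : Finset (Finset (Fin d)), F.card = m ∧
    (∀ e ∈ F, e.card = r) ∧ (∀ e ∈ F, ∀ f ∈ F, e ≠ f → e ∩ f = Q) ∧
    ∑ e ∈ F, c e = 0

/-- `R` is the zero-sum Ramsey number `R(S_m^{(r)}, G)` for hyperstars. -/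
def IsStarRamsey (G : Type*) [AddCommGroup G] (r m R : ℕ) : Prop :=
  IsLeast {d : ℕ | 0 < d ∧ ∀ c : Finset (Fin d) → G, HasZeroSumStar G r m d c} R

/-- `R` is the zero-sum Ramsey number `R(I_m^{(r)}, G)` for intersecting families. -/
def IsIntRamsey (G : Type*) [AddCommGroup G] (r m R : ℕ) : Prop :=
  IsLeast {d : ℕ | 0 < d ∧ ∀ c : Finset (Fin d) → G, HasZeroSumIntersecting G r m d c} R

/-- `R` is the zero-sum Ramsey number `R(S(r,q,m), G)` for delta-systems. -/
def IsDeltaRamsey (G : Type*) [AddCommGroup G] (r q m R : ℕ) : Prop :=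
  IsLeast {d : ℕ | 0 < d ∧ ∀ c : Finset (Fin d) → G, HasZeroSumDelta G r q m d c} R


set_option linter.unusedSectionVars false

namespace GaoProofAux

open Pointwise

variable {G : Type*} [AddCommGroup G] [Fintype G] [DecidableEq G]

/-- If `B` is closed under adding `x` and contains `0`, it contains `-x`. -/
lemma neg_mem_of_closed (B : Finset G) (x : G) (h0 : (0:G) ∈ B)
    (hcl : ∀ b ∈ B, b + x ∈ B) : -x ∈ B := by
  have key : ∀ m : ℕ, (m • x : G) ∈ B := by
    intro m
    induction m with
    | zero => simpa using h0
    | succ k ih => rw [succ_nsmul]; exact hcl _ ih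
  have hpos : 0 < addOrderOf x := addOrderOf_pos x
  have h1 : (addOrderOf x - 1 + 1) • x = (0:G) := by
    rw [Nat.sub_add_cancel hpos]
    exact addOrderOf_nsmul_eq_zero x
  have h2 : (addOrderOf x - 1) • x + x = (0:G) := by rwa [succ_nsmul] at h1
  have h3 : (addOrderOf x - 1) • x = -x := by
    have := h2; linear_combination (norm := abel_nf) this
  rw [← h3]; exact key _

lemma card_union_image (A : Finset G) (x : G) :
    (A ∪ A.image (· + x)).card = A.card + (A.filter (fun a => a + x ∉ A)).card := by
  have hdisj : Disjoint A ((A.image (· + x)) \ A) := Finset.disjoint_sdiff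
  have hun : A ∪ A.image (· + x) = A ∪ ((A.image (· + x)) \ A) := by
    rw [Finset.union_sdiff_self_eq_union]
  have himg : (A.image (· + x)) \ A = (A.filter (fun a => a + x ∉ A)).image (· + x) := by
    ext y
    simp only [Finset.mem_sdiff, Finset.mem_image, Finset.mem_filter]
    constructor
    · rintro ⟨⟨a, ha, rfl⟩, hy⟩
      exact ⟨a, ⟨ha, hy⟩, rfl⟩
    · rintro ⟨a, ⟨ha, hy⟩, rfl⟩
      exact ⟨⟨a, ha, rfl⟩, hy⟩
  rw [hun, Finset.card_union_of_disjoint hdisj, himg,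
    Finset.card_image_of_injective _ (add_left_injective x)]

/-- Kemperman–Scherk theorem. -/
theorem scherk_aux : ∀ (fuel : ℕ) (A B : Finset G),
    (Fintype.card G + 1 - (A.card + B.card)) * (Fintype.card G + 2) + B.card < fuel →
    (0:G) ∈ A → (0:G) ∈ B →
    (∀ a ∈ A, ∀ b ∈ B, a + b = 0 → a = 0) →
    A.card + B.card ≤ (A + B).card + 1 := by
  intro fuel
  induction fuel with
  | zero => intro A B h; omega
  | succ fuel ih =>
    intro A B hmeas h0A h0B hu
    set n := Fintype.card G with hn
    by_cases hbig : n + 1 ≤ A.card + B.card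
    · -- sumset is everything; and |A|+|B| ≤ n+1
      have hAB : A + B = Finset.univ := by
        apply Finset.eq_univ_of_forall
        intro c
        set C := B.image (fun b => c - b) with hC
        have hCcard : C.card = B.card :=
          Finset.card_image_of_injective _ (fun u v huv => by
            have : c - u = c - v := huv
            have := sub_right_injective this
            exact this)
        have hinter : (A ∩ C).Nonempty := by
          rw [← Finset.card_pos]
          have h1 := Finset.card_inter_add_card_union A C
          have h2 : (A ∪ C).card ≤ n := le_trans (Finset.card_le_univ _) (le_of_eq Finset.card_univ)
          omega
        obtain ⟨a, ha⟩ := hinter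
        have haA : a ∈ A := (Finset.mem_inter.mp ha).1
        have haC : a ∈ C := (Finset.mem_inter.mp ha).2
        obtain ⟨b, hb, hab⟩ := Finset.mem_image.mp haC
        have : a + b = c := by rw [← hab]; abel
        exact Finset.mem_add.mpr ⟨a, haA, b, hb, this⟩
      have hbound : A.card + B.card ≤ n + 1 := by
        have hsub : (A.image (fun a => -a)) ∩ B ⊆ {0} := by
          intro y hy
          obtain ⟨hy1, hy2⟩ := Finset.mem_inter.mp hy
          obtain ⟨a, ha, rfl⟩ := Finset.mem_image.mp hy1
          have : a + -a = 0 := by abel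
          have := hu a ha (-a) hy2 this
          simp [this]
        have h1 := Finset.card_inter_add_card_union (A.image (fun a => -a)) B
        have h2 : ((A.image (fun a => -a)) ∩ B).card ≤ 1 := by
          calc ((A.image (fun a => -a)) ∩ B).card ≤ ({0} : Finset G).card :=
            Finset.card_le_card hsub
          _ = 1 := Finset.card_singleton 0
        have h3 : (A.image (fun a => -a)).card = A.card :=
          Finset.card_image_of_injective _ neg_injective
        have h4 : ((A.image (fun a => -a)) ∪ B).card ≤ n :=
          le_trans (Finset.card_le_univ _) (le_of_eq Finset.card_univ)
        omega
      rw [hAB]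
      rw [Finset.card_univ]
      omega
    · push_neg at hbig
      by_cases htriv : ∀ y ∈ A ∩ B, y = 0
      · -- A ∩ B = {0}
        have hABI : A ∩ B = {0} := by
          apply Finset.Subset.antisymm
          · intro y hy; simpa using htriv y hy
          · intro y hy; simp only [Finset.mem_singleton] at hy; subst hy
            exact Finset.mem_inter.mpr ⟨h0A, h0B⟩
        have hsub : A ∪ B ⊆ A + B := by
          intro y hy
          rcases Finset.mem_union.mp hy with h | h
          · exact Finset.mem_add.mpr ⟨y, h, 0, h0B, by abel⟩
          · exact Finset.mem_add.mpr ⟨0, h0A, y, h, by abel⟩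
        have h1 := Finset.card_inter_add_card_union A B
        have h2 : (A ∩ B).card = 1 := by rw [hABI]; exact Finset.card_singleton 0
        have h3 : (A ∪ B).card ≤ (A + B).card := Finset.card_le_card hsub
        omega
      · push_neg at htriv
        obtain ⟨x, hxAB, hxne⟩ := htriv
        have hxA : x ∈ A := (Finset.mem_inter.mp hxAB).1
        have hxB : x ∈ B := (Finset.mem_inter.mp hxAB).2
        have hnxA : -x ∉ A := by
          intro h
          have : -x + x = 0 := by abel
          have := hu (-x) h x hxB this
          exact hxne (by linear_combination (norm := abel_nf) this.symm)
        have hnxB : -x ∉ B := by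
          intro h
          have : x + -x = 0 := by abel
          have := hu x hxA (-x) h this
          exact hxne this
        set f := (A.filter (fun a => a + x ∉ A)).card with hf
        set g := (B.filter (fun b => b + x ∉ B)).card with hg
        have hfpos : 1 ≤ f := by
          rw [hf, Finset.one_le_card]
          by_contra hemp
          rw [Finset.not_nonempty_iff_eq_empty, Finset.filter_eq_empty_iff] at hemp
          exact hnxA (neg_mem_of_closed A x h0A (fun b hb => by
            by_contra hc; exact (hemp hb) hc))
        have hgpos : 1 ≤ g := by
          rw [hg, Finset.one_le_card]
          by_contra hemp
          rw [Finset.not_nonempty_iff_eq_empty, Finset.filter_eq_empty_iff] at hemp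
          exact hnxB (neg_mem_of_closed B x h0B (fun b hb => by
            by_contra hc; exact (hemp hb) hc))
        by_cases hfg : g ≤ f
        · -- transform shrinking B
          set A' := A ∪ A.image (· + x) with hA'
          set B' := B.filter (fun b => b + x ∈ B) with hB'
          have hA'card : A'.card = A.card + f := card_union_image A x
          have hB'card : B'.card + g = B.card := by
            rw [hB', hg]; exact Finset.card_filter_add_card_filter_not _
          have h0A' : (0:G) ∈ A' := Finset.mem_union_left _ h0A
          have h0B' : (0:G) ∈ B' := by
            rw [hB', Finset.mem_filter]
            exact ⟨h0B, by simpa using hxB⟩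
          have hsubset : A' + B' ⊆ A + B := by
            intro y hy
            obtain ⟨a', ha', b', hb', rfl⟩ := Finset.mem_add.mp hy
            have hb'B : b' ∈ B := (Finset.mem_filter.mp hb').1
            have hb'x : b' + x ∈ B := (Finset.mem_filter.mp hb').2
            rcases Finset.mem_union.mp ha' with h | h
            · exact Finset.mem_add.mpr ⟨a', h, b', hb'B, rfl⟩
            · obtain ⟨a, ha, rfl⟩ := Finset.mem_image.mp h
              exact Finset.mem_add.mpr ⟨a, ha, b' + x, hb'x, by abel⟩
          have hu' : ∀ a ∈ A', ∀ b ∈ B', a + b = 0 → a = 0 := by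
            intro a' ha' b' hb' heq
            have hb'B : b' ∈ B := (Finset.mem_filter.mp hb').1
            have hb'x : b' + x ∈ B := (Finset.mem_filter.mp hb').2
            rcases Finset.mem_union.mp ha' with h | h
            · exact hu a' h b' hb'B heq
            · obtain ⟨a, ha, rfl⟩ := Finset.mem_image.mp h
              exfalso
              have heq2 : a + (b' + x) = 0 := by linear_combination (norm := abel_nf) heq
              have ha0 := hu a ha (b' + x) hb'x heq2
              rw [ha0] at heq
              have : b' = -x := by linear_combination (norm := abel_nf) heq
              rw [this] at hb'B
              exact hnxB hb'B
          -- measure decrease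
          have hmono : (n + 1 - (A'.card + B'.card)) ≤ (n + 1 - (A.card + B.card)) := by
            apply Nat.sub_le_sub_left
            omega
          have hmul : (n + 1 - (A'.card + B'.card)) * (n + 2) ≤
              (n + 1 - (A.card + B.card)) * (n + 2) := Nat.mul_le_mul_right _ hmono
          have hrec := ih A' B' (by omega) h0A' h0B' hu'
          have hcardsub : (A' + B').card ≤ (A + B).card := Finset.card_le_card hsubset
          omega
        · -- transform shrinking A; swap roles
          push_neg at hfg
          set P := B ∪ B.image (· + x) with hP
          set Q := A.filter (fun a => a + x ∈ A) with hQ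
          have hPcard : P.card = B.card + g := card_union_image B x
          have hQcard : Q.card + f = A.card := by
            rw [hQ, hf]; exact Finset.card_filter_add_card_filter_not _
          have h0P : (0:G) ∈ P := Finset.mem_union_left _ h0B
          have h0Q : (0:G) ∈ Q := by
            rw [hQ, Finset.mem_filter]
            exact ⟨h0A, by simpa using hxA⟩
          have hsubset : P + Q ⊆ A + B := by
            intro y hy
            obtain ⟨p, hp, q, hq, rfl⟩ := Finset.mem_add.mp hy
            have hqA : q ∈ A := (Finset.mem_filter.mp hq).1
            have hqx : q + x ∈ A := (Finset.mem_filter.mp hq).2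
            rcases Finset.mem_union.mp hp with h | h
            · exact Finset.mem_add.mpr ⟨q, hqA, p, h, by abel⟩
            · obtain ⟨b, hb, rfl⟩ := Finset.mem_image.mp h
              exact Finset.mem_add.mpr ⟨q + x, hqx, b, hb, by abel⟩
          have hu' : ∀ p ∈ P, ∀ q ∈ Q, p + q = 0 → p = 0 := by
            intro p hp q hq heq
            have hqA : q ∈ A := (Finset.mem_filter.mp hq).1
            have hqx : q + x ∈ A := (Finset.mem_filter.mp hq).2
            rcases Finset.mem_union.mp hp with h | h
            · have heq2 : q + p = 0 := by linear_combination (norm := abel_nf) heq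
              have := hu q hqA p h heq2
              rw [this] at heq2
              linear_combination (norm := abel_nf) heq2
            · obtain ⟨b, hb, rfl⟩ := Finset.mem_image.mp h
              exfalso
              have heq2 : (q + x) + b = 0 := by linear_combination (norm := abel_nf) heq
              have := hu (q + x) hqx b hb heq2
              have hq' : q = -x := by linear_combination (norm := abel_nf) this
              rw [hq'] at hqA
              exact hnxA hqA
          have hQn : Q.card ≤ n := le_trans (Finset.card_le_univ _) (le_of_eq Finset.card_univ)
          -- measure decrease: new size sum ≥ s + 1 so first factor drops by ≥ 1
          have hs1 : A.card + B.card + 1 ≤ P.card + Q.card := by omega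
          have hmono : (n + 1 - (P.card + Q.card)) + 1 ≤ (n + 1 - (A.card + B.card)) := by
            omega
          have hmul : ((n + 1 - (P.card + Q.card)) + 1) * (n + 2) ≤
              (n + 1 - (A.card + B.card)) * (n + 2) := Nat.mul_le_mul_right _ hmono
          have hrec := ih P Q (by nlinarith [hmul, hQn]) h0P h0Q hu'
          have hcardsub : (P + Q).card ≤ (A + B).card := Finset.card_le_card hsubset
          omega

theorem scherk (A B : Finset G) (h0A : (0:G) ∈ A) (h0B : (0:G) ∈ B)
    (hu : ∀ a ∈ A, ∀ b ∈ B, a + b = 0 → a = 0) :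
    A.card + B.card ≤ (A + B).card + 1 :=
  scherk_aux ((Fintype.card G + 1 - (A.card + B.card)) * (Fintype.card G + 2) + B.card + 1)
    A B (by omega) h0A h0B hu

/-- Layer-cake: sum of layer cardinalities equals the multiset's card. -/
lemma layer_sum (R : Multiset G) (k : ℕ) (hk : ∀ v : G, R.count v ≤ k) :
    ∑ i ∈ Finset.Icc 1 k, (Finset.univ.filter (fun v : G => i ≤ R.count v)).card
      = Multiset.card R := by
  have h1 : ∀ i, (Finset.univ.filter (fun v : G => i ≤ R.count v)).card
      = ∑ v : G, if i ≤ R.count v then 1 else 0 := fun i => Finset.card_filter _ _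
  calc ∑ i ∈ Finset.Icc 1 k, (Finset.univ.filter (fun v : G => i ≤ R.count v)).card
      = ∑ i ∈ Finset.Icc 1 k, ∑ v : G, if i ≤ R.count v then 1 else 0 := by
        simp_rw [h1]
    _ = ∑ v : G, ∑ i ∈ Finset.Icc 1 k, if i ≤ R.count v then 1 else 0 := Finset.sum_comm
    _ = ∑ v : G, R.count v := by
        apply Finset.sum_congr rfl
        intro v _
        rw [← Finset.card_filter]
        have : (Finset.Icc 1 k).filter (fun i => i ≤ R.count v) = Finset.Icc 1 (R.count v) := by
          ext i
          simp only [Finset.mem_filter, Finset.mem_Icc]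
          have := hk v
          omega
        rw [this, Nat.card_Icc]
        omega
    _ = Multiset.card R := by
        rw [← Multiset.toFinset_sum_count_eq R]
        symm
        apply Finset.sum_subset (Finset.subset_univ _)
        intro v _ hv
        simpa [Multiset.count_eq_zero] using hv


lemma gao_lemma (R : Multiset G) (k : ℕ) (h0 : (0:G) ∉ R)
    (hk : ∀ v : G, R.count v ≤ k) (hcard : Fintype.card G ≤ Multiset.card R) :
    ∃ W : Multiset G, W ≤ R ∧ W ≠ 0 ∧ W.sum = 0 ∧ Multiset.card W ≤ k := by
  by_contra hno
  push_neg at hno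
  -- hno : ∀ W ≤ R, W ≠ 0 → W.sum = 0 → k < card W
  set A : ℕ → Finset G := fun i => Finset.univ.filter (fun v : G => i ≤ R.count v) with hA
  set Sset : ℕ → Finset G := fun j => Nat.rec {0} (fun j S => S + insert 0 (A (j+1))) j
    with hSset
  have hS0 : ∀ j, (0:G) ∈ Sset j := by
    intro j
    induction j with
    | zero => simp [hSset]
    | succ j ih =>
      have : (0:G) + 0 ∈ Sset j + insert 0 (A (j+1)) :=
        Finset.add_mem_add ih (Finset.mem_insert_self 0 _)
      simpa using this
  have h0A : ∀ i, 1 ≤ i → (0:G) ∉ A i := by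
    intro i hi hmem
    rw [hA] at hmem
    simp only [Finset.mem_filter] at hmem
    have : R.count 0 = 0 := Multiset.count_eq_zero.mpr h0
    omega
  have key : ∀ j, j ≤ k →
      (∀ s ∈ Sset j, ∃ U : Multiset G, U ≤ R ∧ U.sum = s ∧ Multiset.card U ≤ j) ∧
      1 + ∑ i ∈ Finset.Icc 1 j, (A i).card ≤ (Sset j).card := by
    intro j
    induction j with
    | zero =>
      intro _
      constructor
      · intro s hs
        have hs0 : s ∈ ({0} : Finset G) := hs
        rw [Finset.mem_singleton] at hs0
        subst hs0
        exact ⟨0, zero_le, by simp, by simp⟩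
      · show 1 + _ ≤ ({0} : Finset G).card
        simp
    | succ j ih =>
      intro hjk
      obtain ⟨hrep, hcnt⟩ := ih (by omega)
      have hSsucc : Sset (j+1) = Sset j + insert 0 (A (j+1)) := rfl
      -- representation
      have hrep' : ∀ s ∈ Sset (j+1), ∃ U : Multiset G, U ≤ R ∧ U.sum = s ∧
          Multiset.card U ≤ j + 1 := by
        intro s' hs'
        rw [hSsucc] at hs'
        obtain ⟨s, hs, a, ha, rfl⟩ := Finset.mem_add.mp hs'
        obtain ⟨U, hUR, hUsum, hUcard⟩ := hrep s hs
        rcases Finset.mem_insert.mp ha with rfl | haA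
        · exact ⟨U, hUR, by simpa using hUsum, by omega⟩
        · refine ⟨a ::ₘ U, ?_, by simp [hUsum]; abel, by simp; omega⟩
          rw [Multiset.le_iff_count]
          intro v
          by_cases hv : v = a
          · subst hv
            have h1 : Multiset.count v U ≤ Multiset.card U := Multiset.count_le_card v U
            have h2 : j + 1 ≤ R.count v := by
              rw [hA] at haA
              simpa using haA
            simp only [Multiset.count_cons_self]
            omega
          · rw [Multiset.count_cons_of_ne hv]
            exact Multiset.le_iff_count.mp hUR v
      refine ⟨hrep', ?_⟩
      -- cardinality growth via scherk
      have huniq : ∀ s ∈ Sset j, ∀ a ∈ insert 0 (A (j+1)), s + a = 0 → s = 0 := by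
        intro s hs a ha heq
        rcases Finset.mem_insert.mp ha with rfl | haA
        · simpa using heq
        · exfalso
          obtain ⟨U, hUR, hUsum, hUcard⟩ := hrep s hs
          have hane : a ≠ 0 := by
            intro h; exact h0A (j+1) (by omega) (h ▸ haA)
          have hUR' : a ::ₘ U ≤ R := by
            rw [Multiset.le_iff_count]
            intro v
            by_cases hv : v = a
            · subst hv
              have h1 : Multiset.count v U ≤ Multiset.card U := Multiset.count_le_card v U
              have h2 : j + 1 ≤ R.count v := by rw [hA] at haA; simpa using haA
              simp only [Multiset.count_cons_self]
              omega
            · rw [Multiset.count_cons_of_ne hv]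
              exact Multiset.le_iff_count.mp hUR v
          have hsum : (a ::ₘ U).sum = 0 := by
            simp [hUsum]
            linear_combination (norm := abel_nf) heq
          have hne : (a ::ₘ U) ≠ 0 := by
            simp [← Multiset.card_pos]
          have := hno (a ::ₘ U) hUR' hne hsum
          simp at this
          omega
      have hgrow := scherk (Sset j) (insert 0 (A (j+1))) (hS0 j)
        (Finset.mem_insert_self 0 _) huniq
      have hins : (insert 0 (A (j+1))).card = (A (j+1)).card + 1 := by
        rw [Finset.card_insert_of_notMem (h0A (j+1) (by omega))]
      have hsum' : ∑ i ∈ Finset.Icc 1 (j+1), (A i).card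
          = (∑ i ∈ Finset.Icc 1 j, (A i).card) + (A (j+1)).card := by
        rw [← Finset.sum_Icc_succ_top (by omega : 1 ≤ j + 1)]
      rw [hSsucc]
      omega
  obtain ⟨_, hfinal⟩ := key k le_rfl
  have h1 : (Sset k).card ≤ Fintype.card G :=
    le_trans (Finset.card_le_univ _) (le_of_eq Finset.card_univ)
  have h2 := layer_sum R k hk
  have h3 : ∑ i ∈ Finset.Icc 1 k, (A i).card = Multiset.card R := by
    rw [hA]; exact h2
  omega

lemma exists_sub_of_card (M : Multiset G) (m : ℕ) (h : m ≤ Multiset.card M) :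
    ∃ U : Multiset G, U ≤ M ∧ Multiset.card U = m := by
  refine ⟨(M.toList.take m : List G), ?_, ?_⟩
  · have hsub : (M.toList.take m).Sublist M.toList := List.take_sublist m M.toList
    have h2 : (↑(M.toList.take m) : Multiset G) ≤ ↑M.toList := Multiset.coe_le.mpr hsub.subperm
    simpa [Multiset.coe_toList] using h2
  · have : M.toList.length = Multiset.card M := Multiset.length_toList M
    simp [List.length_take]
    omega

lemma exists_zero_sum_of_card_ge (M : Multiset G)
    (h : Fintype.card G ≤ Multiset.card M) :
    ∃ U : Multiset G, U ≤ M ∧ U ≠ 0 ∧ U.sum = 0 := by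
  set n := Fintype.card G with hn
  set l := M.toList with hl
  have hlen : l.length = Multiset.card M := Multiset.length_toList M
  set f : Fin (n+1) → G := fun i => (l.take i).sum with hf
  obtain ⟨x, y, hxy, hfeq⟩ := Fintype.exists_ne_map_eq_of_card_lt f (by simp; exact hn.symm.le)
  rcases Nat.lt_or_ge x.val y.val with hlt | hge
  case _ =>
    have hjn : (y:ℕ) ≤ Multiset.card M := by omega
    refine ⟨((l.take y).drop x : List G), ?_, ?_, ?_⟩
    · have hsub : ((l.take y).drop x).Sublist l :=
        ((l.take (y:ℕ)).drop_sublist (x:ℕ)).trans (List.take_sublist _ _)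
      have h2 : (↑((l.take (y:ℕ)).drop (x:ℕ)) : Multiset G) ≤ ↑l := Multiset.coe_le.mpr hsub.subperm
      simpa [hl, Multiset.coe_toList] using h2
    · have hlen2 : ((l.take y).drop x).length = (y:ℕ) - (x:ℕ) := by
        simp [List.length_drop, List.length_take]
        omega
      intro hc
      have hcc := congrArg Multiset.card hc
      simp only [Multiset.coe_card, Multiset.card_zero] at hcc
      omega
    · show ((l.take (y:ℕ)).drop (x:ℕ)).sum = 0
      have h1 : ((l.take (y:ℕ)).take (x:ℕ)).sum + ((l.take (y:ℕ)).drop (x:ℕ)).sum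
          = (l.take (y:ℕ)).sum := List.sum_take_add_sum_drop _ _
      have h2 : (l.take (y:ℕ)).take (x:ℕ) = l.take (x:ℕ) := by
        rw [List.take_take]
        congr 1
        omega
      rw [h2] at h1
      have h3 : (l.take (x:ℕ)).sum = (l.take (y:ℕ)).sum := hfeq
      rw [← h3] at h1
      linear_combination (norm := abel_nf) h1
  case _ =>
    have hlt : (y:ℕ) < (x:ℕ) := by
      rcases Nat.lt_or_ge y.val x.val with h | h
      · exact h
      · exfalso; exact hxy (Fin.ext (by omega))
    have hjn : (x:ℕ) ≤ Multiset.card M := by omega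
    refine ⟨((l.take x).drop y : List G), ?_, ?_, ?_⟩
    · have hsub : ((l.take x).drop y).Sublist l :=
        ((l.take (x:ℕ)).drop_sublist (y:ℕ)).trans (List.take_sublist _ _)
      have h2 : (↑((l.take (x:ℕ)).drop (y:ℕ)) : Multiset G) ≤ ↑l := Multiset.coe_le.mpr hsub.subperm
      simpa [hl, Multiset.coe_toList] using h2
    · have hlen2 : ((l.take x).drop y).length = (x:ℕ) - (y:ℕ) := by
        simp [List.length_drop, List.length_take]
        omega
      intro hc
      have hcc := congrArg Multiset.card hc
      simp only [Multiset.coe_card, Multiset.card_zero] at hcc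
      omega
    · show ((l.take (x:ℕ)).drop (y:ℕ)).sum = 0
      have h1 : ((l.take (x:ℕ)).take (y:ℕ)).sum + ((l.take (x:ℕ)).drop (y:ℕ)).sum
          = (l.take (x:ℕ)).sum := List.sum_take_add_sum_drop _ _
      have h2 : (l.take (x:ℕ)).take (y:ℕ) = l.take (y:ℕ) := by
        rw [List.take_take]
        congr 1
        omega
      rw [h2] at h1
      have h3 : (l.take (x:ℕ)).sum = (l.take (y:ℕ)).sum := hfeq
      rw [h3] at h1
      linear_combination (norm := abel_nf) h1

open Classical in
lemma exists_min_zero_sum (R : Multiset G)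
    (hex : ∃ U : Multiset G, U ≤ R ∧ U ≠ 0 ∧ U.sum = 0) :
    ∃ W : Multiset G, W ≤ R ∧ W ≠ 0 ∧ W.sum = 0 ∧
      ∀ U : Multiset G, U ≤ R → U ≠ 0 → U.sum = 0 →
        Multiset.card W ≤ Multiset.card U := by
  have hex' : ∃ c : ℕ, ∃ U : Multiset G, U ≤ R ∧ U ≠ 0 ∧ U.sum = 0 ∧ Multiset.card U = c := by
    obtain ⟨U, h1, h2, h3⟩ := hex
    exact ⟨Multiset.card U, U, h1, h2, h3, rfl⟩
  obtain ⟨U, h1, h2, h3, h4⟩ := Nat.find_spec hex'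
  refine ⟨U, h1, h2, h3, ?_⟩
  intro V hv1 hv2 hv3
  have := Nat.find_min' hex' (m := Multiset.card V) ⟨V, hv1, hv2, hv3, rfl⟩
  omega

/-- a minimal zero-sum subsequence has length at most `D`. -/
lemma min_piece (D : ℕ)
    (hDzs : ∀ M : Multiset G, Multiset.card M = D → ∃ U, U ≤ M ∧ U ≠ 0 ∧ U.sum = 0)
    (R : Multiset G) (hcard : D ≤ Multiset.card R) :
    ∃ W : Multiset G, W ≤ R ∧ W ≠ 0 ∧ W.sum = 0 ∧ Multiset.card W ≤ D := by
  obtain ⟨U0, hU0, hcU0⟩ := exists_sub_of_card R D hcard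
  obtain ⟨V0, hV0, hV0ne, hV0sum⟩ := hDzs U0 hcU0
  obtain ⟨W, h1, h2, h3, hmin⟩ := exists_min_zero_sum R ⟨V0, le_trans hV0 hU0, hV0ne, hV0sum⟩
  refine ⟨W, h1, h2, h3, ?_⟩
  have := hmin V0 (le_trans hV0 hU0) hV0ne hV0sum
  have : Multiset.card V0 ≤ D := le_trans (Multiset.card_le_card hV0) (le_of_eq hcU0)
  omega

/-- Extraction: split a zero-free multiset into small zero-sum pieces, big zero-sum
pieces, and a small rest. -/
lemma extraction (D h : ℕ)
    (hDzs : ∀ M : Multiset G, Multiset.card M = D → ∃ U, U ≤ M ∧ U ≠ 0 ∧ U.sum = 0)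
    (hD1 : 1 ≤ D) (hDn : D ≤ Fintype.card G) :
    ∀ (c : ℕ) (R : Multiset G), Multiset.card R ≤ c → (0:G) ∉ R →
      (∀ v : G, R.count v ≤ h) →
    ∃ (smalls bigs : List (Multiset G)) (Rest : Multiset G),
      R = smalls.sum + bigs.sum + Rest ∧
      (∀ W ∈ smalls, W.sum = 0 ∧ Multiset.card W ≤ h) ∧
      (∀ W ∈ bigs, W.sum = 0 ∧ Multiset.card W ≤ D) ∧
      Multiset.card (bigs.sum + Rest) < Fintype.card G ∧
      Multiset.card Rest < D := by
  intro c
  induction c with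
  | zero =>
    intro R hc h0 hcnt
    refine ⟨[], [], R, by simp, by simp, by simp, ?_, ?_⟩
    · simp only [List.sum_nil, zero_add]
      have h1 : 1 ≤ Fintype.card G := Fintype.card_pos
      omega
    · omega
  | succ c ih =>
    intro R hc h0 hcnt
    by_cases hn : Fintype.card G ≤ Multiset.card R
    · -- extract a small piece via Gao's lemma
      obtain ⟨W, hWR, hWne, hWsum, hWcard⟩ := gao_lemma R h h0 hcnt hn
      set R' := R - W with hR'
      have hRW : W + R' = R := by
        rw [hR', add_comm]
        exact tsub_add_cancel_of_le hWR
      have hR'le : R' ≤ R := by rw [hR']; exact tsub_le_self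
      have hWpos : 1 ≤ Multiset.card W := by
        rw [Nat.one_le_iff_ne_zero]
        simpa using hWne
      have hcR' : Multiset.card R' ≤ c := by
        have := congrArg Multiset.card hRW
        rw [Multiset.card_add] at this
        omega
      obtain ⟨s, b, rest, heq, hs, hb, hinv1, hinv2⟩ := ih R'
        hcR' (fun hm => h0 (Multiset.mem_of_le hR'le hm))
        (fun v => le_trans (Multiset.le_iff_count.mp hR'le v) (hcnt v))
      refine ⟨W :: s, b, rest, ?_, ?_, hb, hinv1, hinv2⟩
      · rw [List.sum_cons, ← hRW, heq]
        abel
      · intro X hX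
        rcases List.mem_cons.mp hX with rfl | hX'
        · exact ⟨hWsum, hWcard⟩
        · exact hs X hX'
    · push_neg at hn
      by_cases hD : D ≤ Multiset.card R
      · -- extract a big piece
        obtain ⟨W, hWR, hWne, hWsum, hWcard⟩ := min_piece D hDzs R hD
        set R' := R - W with hR'
        have hRW : W + R' = R := by
          rw [hR', add_comm]
          exact tsub_add_cancel_of_le hWR
        have hR'le : R' ≤ R := by rw [hR']; exact tsub_le_self
        have hWpos : 1 ≤ Multiset.card W := by
          rw [Nat.one_le_iff_ne_zero]
          simpa using hWne
        have hcR' : Multiset.card R' ≤ c := by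
          have := congrArg Multiset.card hRW
          rw [Multiset.card_add] at this
          omega
        obtain ⟨s, b, rest, heq, hs, hb, hinv1, hinv2⟩ := ih R'
          hcR' (fun hm => h0 (Multiset.mem_of_le hR'le hm))
          (fun v => le_trans (Multiset.le_iff_count.mp hR'le v) (hcnt v))
        refine ⟨s, W :: b, rest, ?_, hs, ?_, ?_, hinv2⟩
        · rw [List.sum_cons, ← hRW, heq]
          abel
        · intro X hX
          rcases List.mem_cons.mp hX with rfl | hX'
          · exact ⟨hWsum, hWcard⟩
          · exact hb X hX'
        · rw [List.sum_cons]
          have hcards := congrArg Multiset.card hRW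
          have hcards2 := congrArg Multiset.card heq
          rw [Multiset.card_add] at hcards
          rw [Multiset.card_add, Multiset.card_add] at hcards2
          rw [show W + b.sum + rest = W + (b.sum + rest) from by abel, Multiset.card_add,
            Multiset.card_add] at *
          omega
      · push_neg at hD
        refine ⟨[], [], R, by simp, by simp, by simp, ?_, hD⟩
        simp only [List.sum_nil, zero_add]
        omega

lemma assembleBigs (D nn : ℕ) :
    ∀ (bigs : List (Multiset G)) (V : Multiset G),
    (∀ W ∈ bigs, W.sum = 0 ∧ Multiset.card W ≤ D) → V.sum = 0 → Multiset.card V ≤ nn →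
    ∃ V' : Multiset G, V'.sum = 0 ∧ V ≤ V' ∧ V' ≤ V + bigs.sum ∧ Multiset.card V' ≤ nn ∧
      (nn < Multiset.card V' + D ∨ V' = V + bigs.sum) := by
  intro bigs
  induction bigs with
  | nil =>
    intro V _ hsum hcard
    exact ⟨V, hsum, le_refl V, by simp, hcard, Or.inr (by simp)⟩
  | cons W bs ih =>
    intro V hpieces hsum hcard
    have hW := hpieces W List.mem_cons_self
    by_cases hfit : Multiset.card V + Multiset.card W ≤ nn
    · obtain ⟨V', h1, h2, h3, h4, h5⟩ := ih (V + W)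
        (fun X hX => hpieces X (List.mem_cons_of_mem W hX))
        (by rw [Multiset.sum_add, hsum, hW.1]; simp)
        (by rw [Multiset.card_add]; omega)
      refine ⟨V', h1, le_trans (Multiset.le_add_right V W) h2, ?_, h4, ?_⟩
      · rw [List.sum_cons, show V + (W + bs.sum) = V + W + bs.sum from by abel]
        exact h3
      · rcases h5 with h | h
        · exact Or.inl h
        · right
          rw [h, List.sum_cons]
          abel
    · refine ⟨V, hsum, le_refl V, Multiset.le_add_right V _, hcard, Or.inl ?_⟩
      omega

lemma assembleSmalls (h nn : ℕ) :
    ∀ (smalls : List (Multiset G)) (V : Multiset G),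
    (∀ W ∈ smalls, W.sum = 0 ∧ Multiset.card W ≤ h) → V.sum = 0 → Multiset.card V ≤ nn →
    ∃ V' : Multiset G, V'.sum = 0 ∧ V' ≤ V + smalls.sum ∧ Multiset.card V' ≤ nn ∧
      (nn ≤ Multiset.card V' + h ∨
        Multiset.card V + Multiset.card smalls.sum ≤ Multiset.card V') := by
  intro smalls
  induction smalls with
  | nil =>
    intro V _ hsum hcard
    exact ⟨V, hsum, by simp, hcard, Or.inr (by simp)⟩
  | cons W s ih =>
    intro V hpieces hsum hcard
    have hW := hpieces W List.mem_cons_self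
    by_cases hstop : nn ≤ Multiset.card V + h
    · exact ⟨V, hsum, Multiset.le_add_right V _, hcard, Or.inl hstop⟩
    · push_neg at hstop
      obtain ⟨V', h1, h2, h3, h4⟩ := ih (V + W)
        (fun X hX => hpieces X (List.mem_cons_of_mem W hX))
        (by rw [Multiset.sum_add, hsum, hW.1]; simp)
        (by rw [Multiset.card_add]; omega)
      refine ⟨V', h1, ?_, h3, ?_⟩
      · rw [List.sum_cons, show V + (W + s.sum) = V + W + s.sum from by abel]
        exact h2
      · rcases h4 with hc | hc
        · exact Or.inl hc
        · right
          have h5 : Multiset.card (W :: s : List (Multiset G)).sum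
              = Multiset.card W + Multiset.card s.sum := by
            rw [List.sum_cons, Multiset.card_add]
          rw [Multiset.card_add] at hc
          omega

/-- The engine: find a zero-sum subsequence of the zero-free part with length in
`[n - h, n]`. -/
lemma engine (D h : ℕ)
    (hDzs : ∀ M : Multiset G, Multiset.card M = D → ∃ U, U ≤ M ∧ U ≠ 0 ∧ U.sum = 0)
    (hD1 : 1 ≤ D) (hDn : D ≤ Fintype.card G) (T0 : Multiset G)
    (h0 : (0:G) ∉ T0) (hcnt : ∀ v : G, T0.count v ≤ h)
    (hcard : Multiset.card T0 + h + 1 = Fintype.card G + D) :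
    ∃ V : Multiset G, V ≤ T0 ∧ V.sum = 0 ∧
      Fintype.card G ≤ Multiset.card V + h ∧ Multiset.card V ≤ Fintype.card G := by
  set n := Fintype.card G with hn
  obtain ⟨smalls, bigs, Rest, heq, hsm, hbg, hinv1, hinv2⟩ :=
    extraction D h hDzs hD1 hDn (Multiset.card T0) T0 le_rfl h0 hcnt
  obtain ⟨V1, hV1sum, -, hV1le, hV1card, hV1alt⟩ :=
    assembleBigs D n bigs (0 : Multiset G) hbg rfl (by simp)
  rw [zero_add] at hV1le
  obtain ⟨V2, hV2sum, hV2le, hV2card, hV2alt⟩ :=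
    assembleSmalls h n smalls V1 hsm hV1sum hV1card
  have hV2T0 : V2 ≤ T0 := by
    calc V2 ≤ V1 + smalls.sum := hV2le
    _ ≤ bigs.sum + smalls.sum := add_le_add_left hV1le _
    _ ≤ T0 := by
        rw [heq, show smalls.sum + bigs.sum + Rest = (bigs.sum + smalls.sum) + Rest from by abel]
        exact Multiset.le_add_right _ _
  refine ⟨V2, hV2T0, hV2sum, ?_, hV2card⟩
  -- cardinality bookkeeping
  have hT0cards : Multiset.card T0 =
      Multiset.card smalls.sum + Multiset.card bigs.sum + Multiset.card Rest := by
    rw [heq, Multiset.card_add, Multiset.card_add]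
  rw [Multiset.card_add] at hinv1
  rcases hV2alt with hfin | hV2big
  · exact hfin
  · rcases hV1alt with hfull | hall
    · -- bigs stopped early: smalls supply ≥ D - h
      omega
    · -- all bigs added
      rw [zero_add] at hall
      rw [hall] at hV2big
      omega

theorem stmt_1_aux (D : ℕ)
    (hD : IsDavenport G D) (S : Multiset G)
    (hS : Multiset.card S = Fintype.card G + D - 1) :
    ∃ T, T ≤ S ∧ Multiset.card T = Fintype.card G ∧ T.sum = 0 := by
  obtain ⟨⟨hDpos, hDzs⟩, hDleast⟩ := hD
  set n := Fintype.card G with hn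
  have hnpos : 1 ≤ n := Fintype.card_pos
  have hDn : D ≤ n := by
    apply hDleast
    exact ⟨hnpos, fun M hM => exists_zero_sum_of_card_ge M (le_of_eq hM.symm)⟩
  have hScard : Multiset.card S + 1 = n + D := by omega
  -- find max-multiplicity element
  obtain ⟨g0, -, hg0⟩ := Finset.exists_max_image Finset.univ (fun v : G => S.count v)
    ⟨0, Finset.mem_univ 0⟩
  set h := S.count g0 with hh
  have hmaxS : ∀ v : G, S.count v ≤ h := fun v => hg0 v (Finset.mem_univ v)
  by_cases hbig : n ≤ h
  · -- take n copies of g0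
    refine ⟨Multiset.replicate n g0, ?_, by simp, ?_⟩
    · rw [Multiset.le_iff_count]
      intro v
      rw [Multiset.count_replicate]
      by_cases hv : g0 = v
      · subst hv; simpa using le_trans hbig (le_refl _)
      · simp [hv]
    · rw [Multiset.sum_replicate, hn]
      exact card_nsmul_eq_zero
  · push_neg at hbig
    -- translate so that 0 has maximal multiplicity
    set S' := S.map (fun v => v - g0) with hS'
    have hinj : Function.Injective (fun v : G => v - g0) := fun a b hab => by
      simpa using sub_left_injective hab
    have hcount : ∀ v : G, S'.count v = S.count (v + g0) := by
      intro v
      have := Multiset.count_map_eq_count' (fun v : G => v - g0) S hinj (v + g0)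
      simpa using this
    have hcount0 : S'.count 0 = h := by rw [hcount]; simp [hh]
    have hmax' : ∀ v : G, S'.count v ≤ h := fun v => by rw [hcount]; exact hmaxS _
    have hS'card : Multiset.card S' = Multiset.card S := Multiset.card_map _ _
    -- zero-free part
    set T0 := S'.filter (fun v => v ≠ 0) with hT0
    have h0T0 : (0:G) ∉ T0 := by
      intro hmem
      have := Multiset.of_mem_filter hmem
      exact this rfl
    have hcntT0 : ∀ v : G, T0.count v ≤ h := fun v =>
      le_trans (Multiset.le_iff_count.mp (Multiset.filter_le _ S') v) (hmax' v)
    have hsplit : Multiset.card S' = Multiset.card T0 + h := by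
      have h1 : S'.filter (fun v => v ≠ 0) + S'.filter (fun v => ¬ v ≠ 0) = S' :=
        Multiset.filter_add_not _ _
      have h2 := congrArg Multiset.card h1
      rw [Multiset.card_add] at h2
      have h3 : S'.filter (fun v => ¬ v ≠ 0) = Multiset.replicate
          (Multiset.card (S'.filter (fun v => ¬ v ≠ 0))) 0 := by
        rw [Multiset.eq_replicate]
        exact ⟨rfl, fun b hb => by simpa using Multiset.of_mem_filter hb⟩
      have h4 : Multiset.card (S'.filter (fun v => ¬ v ≠ 0)) = h := by
        have h5 : (S'.filter (fun v => ¬ v ≠ 0)).count 0 = h := by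
          rw [Multiset.count_filter]
          simpa using hcount0
        conv_lhs => rw [h3]
        rw [h3] at h5
        simpa using h5.symm ▸ (by
          rw [Multiset.count_replicate] at h5
          simpa using h5)
      rw [← h2, h4]
    have hT0card : Multiset.card T0 + h + 1 = n + D := by omega
    obtain ⟨V, hVT0, hVsum, hVlow, hVhigh⟩ :=
      engine D h hDzs hDpos hDn T0 h0T0 hcntT0 hT0card
    -- pad with zeros
    set T' := V + Multiset.replicate (n - Multiset.card V) 0 with hT'
    have hT'card : Multiset.card T' = n := by
      rw [hT', Multiset.card_add, Multiset.card_replicate]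
      omega
    have hT'sum : T'.sum = 0 := by
      rw [hT', Multiset.sum_add, hVsum, Multiset.sum_replicate]
      simp
    have hV0 : V.count 0 = 0 := by
      rw [Multiset.count_eq_zero]
      intro hmem
      exact h0T0 (Multiset.mem_of_le hVT0 hmem)
    have hT'le : T' ≤ S' := by
      rw [Multiset.le_iff_count]
      intro v
      rw [hT', Multiset.count_add, Multiset.count_replicate]
      by_cases hv : v = 0
      · subst hv
        rw [hV0, if_pos rfl, hcount0]
        omega
      · rw [if_neg (fun hc => hv hc.symm)]
        have h6 : V.count v ≤ T0.count v := Multiset.le_iff_count.mp hVT0 v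
        have h7 : T0.count v = S'.count v := by
          rw [hT0, Multiset.count_filter, if_pos hv]
        omega
    -- map back
    refine ⟨T'.map (fun v => v + g0), ?_, ?_, ?_⟩
    · have h8 : T'.map (fun v => v + g0) ≤ S'.map (fun v => v + g0) :=
        Multiset.map_le_map hT'le
      have h9 : S'.map (fun v => v + g0) = S := by
        rw [hS', Multiset.map_map]
        have : ((fun v : G => v + g0) ∘ (fun v : G => v - g0)) = id := by
          funext x
          simp [Function.comp, sub_add_cancel]
        rw [this, Multiset.map_id]
      rwa [h9] at h8
    · rw [Multiset.card_map, hT'card]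
    · have h10 : (T'.map (fun v => v + g0)).sum = T'.sum + Multiset.card T' • g0 := by
        have h11 : (T'.map (fun v => v + g0)).sum
            = (T'.map id).sum + (T'.map (fun _ => g0)).sum := by
          rw [← Multiset.sum_map_add]
          rfl
        rw [h11, Multiset.map_id, Multiset.map_const', Multiset.sum_replicate]
      rw [h10, hT'sum, hT'card, hn, card_nsmul_eq_zero]
      simp

end GaoProofAux

/-- Gao's theorem: a sequence of length `|G| + D(G) - 1` contains a zero-sum
subsequence of length exactly `|G|`. -/
theorem stmt_1 (G : Type*) [AddCommGroup G] [Fintype G] (D : ℕ)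
    (hD : IsDavenport G D) (S : Multiset G)
    (hS : Multiset.card S = Fintype.card G + D - 1) :
    ∃ T, T ≤ S ∧ Multiset.card T = Fintype.card G ∧ T.sum = 0 := by
  letI : DecidableEq G := Classical.decEq G
  exact GaoProofAux.stmt_1_aux D hD S hS
end

section
/- For every finite abelian group G, s(G) ≤ |G| + exp(G) - 1, where s(G) is the smallest positive integer d such that every sequence of d elements of G contains a zero-sum subsequence of length exactly exp(G). -/
set_option linter.unusedSectionVars false

open Finset
open scoped Pointwise

universe u

private lemma lex3_lt {K p₁ q₁ r₁ p₂ q₂ r₂ : ℕ} (hq₁ : q₁ < K) (hr₁ : r₁ < K)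
    (h : p₁ < p₂ ∨ p₁ = p₂ ∧ (q₁ < q₂ ∨ q₁ = q₂ ∧ r₁ < r₂)) :
    p₁ * (K * K) + q₁ * K + r₁ < p₂ * (K * K) + q₂ * K + r₂ := by
  rcases h with h | ⟨rfl, h | ⟨rfl, h⟩⟩
  · have h1 : q₁ * K + r₁ < K * K := by
      have h2 : (q₁ + 1) * K ≤ K * K := Nat.mul_le_mul_right _ hq₁
      have h3 : q₁ * K + K = (q₁ + 1) * K := by ring
      omega
    have h4 : (p₁ + 1) * (K * K) ≤ p₂ * (K * K) := Nat.mul_le_mul_right _ h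
    have h5 : p₁ * (K * K) + K * K = (p₁ + 1) * (K * K) := by ring
    omega
  · have h2 : (q₁ + 1) * K ≤ q₂ * K := Nat.mul_le_mul_right _ h
    have h3 : q₁ * K + K = (q₁ + 1) * K := by ring
    omega
  · omega

private lemma card_periodic {G : Type u} [AddCommGroup G] [Fintype G] [DecidableEq G]
    (H : AddSubgroup G) [DecidableEq (G ⧸ H)] (P : Finset G)
    (hP : ∀ x ∈ P, ∀ h ∈ H, x + h ∈ P) :
    P.card = #(P.image (QuotientAddGroup.mk' H)) * Nat.card H := by
  classical
  haveI : Fintype H := Fintype.ofFinite _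
  rw [Nat.card_eq_fintype_card]
  have hfib : ∀ q ∈ P.image (QuotientAddGroup.mk' H),
      #(P.filter (fun x => QuotientAddGroup.mk' H x = q)) = Fintype.card H := by
    intro q hq
    obtain ⟨x₀, hx₀, rfl⟩ := Finset.mem_image.mp hq
    have himg : P.filter (fun x => QuotientAddGroup.mk' H x = QuotientAddGroup.mk' H x₀)
        = Finset.image (fun h : H => x₀ + (h : G)) Finset.univ := by
      ext x
      simp only [Finset.mem_filter, Finset.mem_image, Finset.mem_univ, true_and]
      constructor
      · rintro ⟨hxP, hx'⟩
        have hxx : (x : G ⧸ H) = (x₀ : G ⧸ H) := by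
          simpa [QuotientAddGroup.mk'_apply] using hx'
        have h2 : -x + x₀ ∈ H := (QuotientAddGroup.eq (s := H)).mp hxx
        have h3 : x - x₀ ∈ H := by
          have := neg_mem h2
          simpa [neg_add_rev, sub_eq_add_neg, add_comm] using this
        exact ⟨⟨x - x₀, h3⟩, by simp⟩
      · rintro ⟨h, rfl⟩
        refine ⟨hP x₀ hx₀ _ h.2, ?_⟩
        have h0 : ((h : G) : G ⧸ H) = 0 := (QuotientAddGroup.eq_zero_iff _).mpr h.2
        simp [QuotientAddGroup.mk'_apply, QuotientAddGroup.mk_add, h0]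
    rw [himg, Finset.card_image_of_injective _
        (show Function.Injective (fun h : H => x₀ + (h : G)) from
          fun h₁ h₂ he => Subtype.val_injective (add_left_cancel he)),
      Finset.card_univ]
  calc #P = ∑ q ∈ P.image (QuotientAddGroup.mk' H),
        #(P.filter (fun x => QuotientAddGroup.mk' H x = q)) :=
      card_eq_sum_card_image (QuotientAddGroup.mk' H) P
    _ = ∑ _q ∈ P.image (QuotientAddGroup.mk' H), Fintype.card H := Finset.sum_congr rfl hfib
    _ = _ := by rw [Finset.sum_const, smul_eq_mul]

private theorem scherk_rec : ∀ (n : ℕ) (G : Type u) [AddCommGroup G] [Fintype G] [DecidableEq G],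
    Fintype.card G ≤ n → ∀ (N : ℕ) (A B : Finset G) (c a₀ b₀ : G),
      #(A + B) * ((2 * Fintype.card G + 2) * (2 * Fintype.card G + 2)) +
        (2 * Fintype.card G - (#A + #B)) * (2 * Fintype.card G + 2) + #A ≤ N →
      a₀ ∈ A → b₀ ∈ B → a₀ + b₀ = c →
      (∀ a ∈ A, ∀ b ∈ B, a + b = c → a = a₀ ∧ b = b₀) →
      A.card + #B ≤ #(A + B) + 1 := by
  intro n
  induction n with
  | zero =>
    intro G _ _ _ hn
    exact absurd (Fintype.card_pos.trans_le hn) (lt_irrefl 0)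
  | succ n ihn =>
    intro G instG instF instD hGcard N
    induction N with
    | zero =>
      intro A B c a₀ b₀ hμ ha₀ hb₀ hc huniq
      have : 0 < #A := Finset.card_pos.mpr ⟨a₀, ha₀⟩
      omega
    | succ N ihN =>
      intro A B c a₀ b₀ hμ ha₀ hb₀ hc huniq
      classical
      set m := Fintype.card G with hm
      have hAm : #A ≤ m := Finset.card_le_univ A
      have hBm : #B ≤ m := Finset.card_le_univ B
      have hABm : #(A + B) ≤ m := Finset.card_le_univ _
      -- Case 0: swap if #B < #A
      by_cases hswap : #B < #A
      · have hBA : B + A = A + B := by rw [add_comm]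
        have hμ' : #(B + A) * ((2 * m + 2) * (2 * m + 2)) + (2 * m - (#B + #A)) * (2 * m + 2) + #B ≤ N := by
          have hlt : #(B + A) * ((2 * m + 2) * (2 * m + 2)) + (2 * m - (#B + #A)) * (2 * m + 2) + #B
              < #(A + B) * ((2 * m + 2) * (2 * m + 2)) + (2 * m - (#A + #B)) * (2 * m + 2) + #A := by
            apply lex3_lt (by omega) (by omega)
            right
            exact ⟨by rw [hBA], Or.inr ⟨by omega, hswap⟩⟩
          omega
        have := ihN B A c b₀ a₀ hμ' hb₀ ha₀ (by rw [← hc, add_comm])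
          (fun b hb a ha hba => ((huniq a ha b hb (by rw [← hba, add_comm])).symm))
        rw [hBA] at this
        omega
      push_neg at hswap
      -- Case 1: A is a singleton
      by_cases hA1 : #A = 1
      · obtain ⟨a, rfl⟩ := Finset.card_eq_one.mp hA1
        rw [Finset.singleton_add, Finset.card_vadd_finset]
        omega
      -- Case 2: no good g
      by_cases hgood : ∃ g : G, g ≠ 0 ∧ a₀ + g ∈ A ∧ b₀ + g ∈ B
      case neg =>
        push_neg at hgood
        set A' := A.image (fun x => x - a₀) with hA'
        set B' := B.image (fun x => x - b₀) with hB'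
        have hcardA' : #A' = #A := Finset.card_image_of_injective _ sub_left_injective
        have hcardB' : #B' = #B := Finset.card_image_of_injective _ sub_left_injective
        have hinter : A' ∩ B' ⊆ {0} := by
          intro g hg
          obtain ⟨hg1, hg2⟩ := Finset.mem_inter.mp hg
          obtain ⟨a, ha, rfl⟩ := Finset.mem_image.mp hg1
          obtain ⟨b, hb, hbe⟩ := Finset.mem_image.mp hg2
          rw [Finset.mem_singleton]
          by_contra hne
          have h1 : a₀ + (a - a₀) ∈ A := by simpa using ha
          have h2 : b₀ + (a - a₀) ∈ B := by
            have hb' : b₀ + (b - b₀) ∈ B := by simpa using hb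
            rwa [hbe] at hb'
          exact hgood (a - a₀) hne h1 h2
        have hsub : A' ∪ B' ⊆ (A + B).image (fun x => x - c) := by
          intro g hg
          rcases Finset.mem_union.mp hg with hg | hg
          · obtain ⟨a, ha, rfl⟩ := Finset.mem_image.mp hg
            refine Finset.mem_image.mpr ⟨a + b₀, Finset.add_mem_add ha hb₀, ?_⟩
            rw [← hc]; abel
          · obtain ⟨b, hb, rfl⟩ := Finset.mem_image.mp hg
            refine Finset.mem_image.mpr ⟨a₀ + b, Finset.add_mem_add ha₀ hb, ?_⟩
            rw [← hc]; abel
        have h1 : #(A' ∪ B') + #(A' ∩ B') = #A' + #B' := Finset.card_union_add_card_inter _ _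
        have h2 : #(A' ∩ B') ≤ 1 := by
          have := Finset.card_le_card hinter
          simpa using this
        have h3 : #(A' ∪ B') ≤ #(A + B) := by
          calc #(A' ∪ B') ≤ #((A + B).image (fun x => x - c)) := Finset.card_le_card hsub
            _ ≤ #(A + B) := Finset.card_image_le
        omega
      case pos =>
        obtain ⟨g, hg0, hgA, hgB⟩ := hgood
        have hA'g : a₀ - g ∉ A := by
          intro hmem
          have hsum : (a₀ - g) + (b₀ + g) = c := by rw [← hc]; abel
          exact hg0 (sub_eq_self.mp (huniq _ hmem _ hgB hsum).1)
        have hB'g : b₀ - g ∉ B := by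
          intro hmem
          have hsum : (a₀ + g) + (b₀ - g) = c := by rw [← hc]; abel
          exact hg0 (sub_eq_self.mp (huniq _ hgA _ hmem hsum).2)
        set Ag := A.image (fun x => x + g) with hAg
        set Bg := B.image (fun x => x - g) with hBg
        have hcardAg : #Ag = #A := Finset.card_image_of_injective _ (add_left_injective g)
        have hcardBg : #Bg = #B := Finset.card_image_of_injective _ sub_left_injective
        have hmemAg : ∀ x, x ∈ Ag ↔ x - g ∈ A := by
          intro x
          constructor
          · rintro hx
            obtain ⟨a, ha, rfl⟩ := Finset.mem_image.mp hx
            simpa using ha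
          · intro hx
            exact Finset.mem_image.mpr ⟨x - g, hx, by abel⟩
        have hmemBg : ∀ x, x ∈ Bg ↔ x + g ∈ B := by
          intro x
          constructor
          · rintro hx
            obtain ⟨b, hb, rfl⟩ := Finset.mem_image.mp hx
            simpa [sub_add_cancel] using hb
          · intro hx
            exact Finset.mem_image.mpr ⟨x + g, hx, by abel⟩
        by_cases hstuck : Ag = A
        · -- stuck case : A is periodic under g; pass to the quotient
          have hfwd : ∀ a ∈ A, a + g ∈ A := by
            intro a ha
            rw [← hstuck]
            exact Finset.mem_image_of_mem _ ha
          have hbwd : ∀ a ∈ A, a - g ∈ A := by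
            intro a ha
            rw [← hstuck] at ha
            exact (hmemAg a).mp ha
          set H := AddSubgroup.zmultiples g with hH
          have hper : ∀ a ∈ A, ∀ h ∈ H, a + h ∈ A := by
            have key : ∀ z : ℤ, ∀ a ∈ A, a + z • g ∈ A := by
              intro z
              induction z using Int.induction_on with
              | zero => intro a ha; simpa using ha
              | succ k ih =>
                intro a ha
                have h1 := hfwd _ (ih a ha)
                have heq : ((k : ℤ) + 1) • g = (k : ℤ) • g + g := by
                  rw [add_smul, one_smul]
                rw [heq, ← add_assoc]
                exact h1
              | pred k ih =>
                intro a ha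
                have h1 := hbwd _ (ih a ha)
                have heq : (-(k : ℤ) - 1) • g = (-(k : ℤ)) • g - g := by
                  rw [sub_smul, one_smul]
                rw [heq, sub_eq_add_neg, ← add_assoc, ← sub_eq_add_neg]
                exact h1
            intro a ha h hh
            obtain ⟨z, rfl⟩ := AddSubgroup.mem_zmultiples_iff.mp hh
            exact key z a ha
          haveI : DecidableEq (G ⧸ H) := Classical.decEq _
          haveI : Fintype (G ⧸ H) := Fintype.ofFinite _
          haveI : Fintype H := Fintype.ofFinite _
          set π := QuotientAddGroup.mk' H with hπ
          -- the quotient group is strictly smaller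
          have hHcard2 : 2 ≤ Nat.card H := by
            haveI : Nontrivial H := by
              refine ⟨⟨⟨g, AddSubgroup.mem_zmultiples g⟩, 0, ?_⟩⟩
              simp [hg0]
            have := Fintype.one_lt_card (α := H)
            simp only [Nat.card_eq_fintype_card]; omega
          have hqcard : Fintype.card (G ⧸ H) ≤ n := by
            have hlag := AddSubgroup.card_eq_card_quotient_mul_card_addSubgroup H
            rw [Nat.card_eq_fintype_card, Nat.card_eq_fintype_card (α := G ⧸ H)] at hlag
            have hqpos : 0 < Fintype.card (G ⧸ H) := Fintype.card_pos
            have h2 : Fintype.card (G ⧸ H) * 2 ≤ Fintype.card (G ⧸ H) * Nat.card H :=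
              Nat.mul_le_mul_left _ hHcard2
            omega
          set Aq := A.image π with hAq
          set Bq := B.image π with hBq
          have hABper : ∀ x ∈ A + B, ∀ h ∈ H, x + h ∈ A + B := by
            intro x hx h hh
            obtain ⟨a, ha, b, hb, rfl⟩ := Finset.mem_add.mp hx
            have : (a + h) + b = a + b + h := by abel
            exact this ▸ Finset.add_mem_add (hper a ha h hh) hb
          have hAcard : #A = #Aq * Nat.card H := card_periodic H A hper
          have hABcard : #(A + B) = #((A + B).image π) * Nat.card H := card_periodic H _ hABper
          have himgAB : (A + B).image π = Aq + Bq := Finset.image_add π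
          -- the fiber of B over b₀ is just {b₀}
          have hBfiber : ∀ x ∈ B, π x = π b₀ → x = b₀ := by
            intro x hx he
            have hxx : (x : G ⧸ H) = (b₀ : G ⧸ H) := by
              exact he
            have h2 : -x + b₀ ∈ H := (QuotientAddGroup.eq (s := H)).mp hxx
            have hsum : (a₀ + (-x + b₀)) + x = c := by rw [← hc]; abel
            exact ((huniq _ (hper a₀ ha₀ _ h2) _ hx hsum).2)
          -- quotient unique representation
          have hquniq : ∀ x ∈ Aq, ∀ y ∈ Bq, x + y = π c → x = π a₀ ∧ y = π b₀ := by
            intro x hx y hy hxy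
            obtain ⟨a, ha, rfl⟩ := Finset.mem_image.mp hx
            obtain ⟨b, hb, rfl⟩ := Finset.mem_image.mp hy
            have hmk : ((a + b : G) : G ⧸ H) = ((c : G) : G ⧸ H) := by
              have : π (a + b) = π c := by rw [map_add]; exact hxy
              exact this
            have h2 : -(a + b) + c ∈ H := (QuotientAddGroup.eq (s := H)).mp hmk
            have hsum : (a + (-(a + b) + c)) + b = c := by abel
            obtain ⟨e1, e2⟩ := huniq _ (hper a ha _ h2) _ hb hsum
            constructor
            · have : π (a + (-(a + b) + c)) = π a₀ := by rw [e1]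
              rw [← this, map_add]
              have hz : π (-(a + b) + c) = 0 := by
                have := (QuotientAddGroup.eq_zero_iff (-(a + b) + c)).mpr h2
                exact this
              rw [hz, add_zero]
            · rw [e2]
          -- apply the induction hypothesis for the smaller group
          have hmain := ihn (G ⧸ H) hqcard
            (#(Aq + Bq) * ((2 * Fintype.card (G ⧸ H) + 2) * (2 * Fintype.card (G ⧸ H) + 2)) +
              (2 * Fintype.card (G ⧸ H) - (#Aq + #Bq)) * (2 * Fintype.card (G ⧸ H) + 2) + #Aq)
            Aq Bq (π c) (π a₀) (π b₀) le_rfl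
            (Finset.mem_image_of_mem _ ha₀) (Finset.mem_image_of_mem _ hb₀)
            (by rw [← map_add, hc]) hquniq
          -- the b₀-fiber bound : #B ≤ 1 + (#Bq - 1) * |H|
          have hπb₀ : π b₀ ∈ Bq := Finset.mem_image_of_mem _ hb₀
          have hfibble : ∀ q ∈ Bq.erase (π b₀), #(B.filter (fun x => π x = q)) ≤ Nat.card H := by
            intro q hq
            obtain ⟨b₁, hb₁, rfl⟩ := Finset.mem_image.mp (Finset.mem_of_mem_erase hq)
            have hsub : B.filter (fun x => π x = π b₁) ⊆
                Finset.univ.image (fun h : H => b₁ + (h : G)) := by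
              intro x hx
              obtain ⟨hxB, hxq⟩ := Finset.mem_filter.mp hx
              have hxx : (x : G ⧸ H) = (b₁ : G ⧸ H) := by
                exact hxq
              have h2 : -x + b₁ ∈ H := (QuotientAddGroup.eq (s := H)).mp hxx
              have h3 : x - b₁ ∈ H := by
                have := neg_mem h2
                simpa [neg_add_rev, sub_eq_add_neg, add_comm] using this
              exact Finset.mem_image.mpr ⟨⟨x - b₁, h3⟩, Finset.mem_univ _, by simp⟩
            calc #(B.filter (fun x => π x = π b₁)) ≤ _ := Finset.card_le_card hsub
              _ ≤ #(Finset.univ (α := H)) := Finset.card_image_le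
              _ = Nat.card H := by rw [Finset.card_univ, Nat.card_eq_fintype_card]
          have hBbound : #B ≤ 1 + #(Bq.erase (π b₀)) * Nat.card H := by
            have hcb : #B = ∑ q ∈ Bq, #(B.filter (fun x => π x = q)) :=
              card_eq_sum_card_image π B
            have hsplit : ∑ q ∈ Bq, #(B.filter (fun x => π x = q))
                = #(B.filter (fun x => π x = π b₀)) +
                  ∑ q ∈ Bq.erase (π b₀), #(B.filter (fun x => π x = q)) :=
              (Finset.add_sum_erase _ _ hπb₀).symm
            have hfib0 : #(B.filter (fun x => π x = π b₀)) = 1 := by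
              rw [show B.filter (fun x => π x = π b₀) = {b₀} from ?_, Finset.card_singleton]
              ext x
              simp only [Finset.mem_filter, Finset.mem_singleton]
              constructor
              · rintro ⟨hxB, hxq⟩; exact hBfiber x hxB hxq
              · rintro rfl; exact ⟨hb₀, rfl⟩
            have hrest : ∑ q ∈ Bq.erase (π b₀), #(B.filter (fun x => π x = q))
                ≤ #(Bq.erase (π b₀)) * Nat.card H := by
              calc ∑ q ∈ Bq.erase (π b₀), #(B.filter (fun x => π x = q))
                  ≤ ∑ _q ∈ Bq.erase (π b₀), Nat.card H := Finset.sum_le_sum hfibble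
                _ = #(Bq.erase (π b₀)) * Nat.card H := by
                    rw [Finset.sum_const, smul_eq_mul]
            omega
          -- final arithmetic
          have herase : #(Bq.erase (π b₀)) + 1 = #Bq := by
            rw [Finset.card_erase_of_mem hπb₀]
            have : 0 < #Bq := Finset.card_pos.mpr ⟨π b₀, hπb₀⟩
            omega
          rw [himgAB] at hABcard
          have hstep : #Aq + #(Bq.erase (π b₀)) ≤ #(Aq + Bq) := by omega
          have hmul : (#Aq + #(Bq.erase (π b₀))) * Nat.card H ≤ #(Aq + Bq) * Nat.card H :=
            Nat.mul_le_mul_right _ hstep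
          rw [add_mul] at hmul
          omega
        · -- non-stuck case : e-transforms
          have hAgA : #(A ∩ Ag) < #A := by
            refine Finset.card_lt_card ?_
            refine ⟨Finset.inter_subset_left, fun hsub => hstuck ?_⟩
            have : A ⊆ Ag := fun x hx => (Finset.mem_inter.mp (hsub hx)).2
            exact (Finset.eq_of_subset_of_card_le this (by omega)).symm ▸ rfl
          set T1a := A ∪ Ag with hT1a
          set T1b := B ∩ Bg with hT1b
          set T2a := A ∩ Ag with hT2a
          set T2b := B ∪ Bg with hT2b
          have hT1sub : T1a + T1b ⊆ A + B := by
            intro x hx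
            obtain ⟨y, hy, z, hz, rfl⟩ := Finset.mem_add.mp hx
            have hzB : z ∈ B := (Finset.mem_inter.mp hz).1
            have hzBg : z + g ∈ B := (hmemBg z).mp (Finset.mem_inter.mp hz).2
            rcases Finset.mem_union.mp hy with hy | hy
            · exact Finset.add_mem_add hy hzB
            · have hyA : y - g ∈ A := (hmemAg y).mp hy
              have : (y - g) + (z + g) = y + z := by abel
              exact this ▸ Finset.add_mem_add hyA hzBg
          have hT2sub : T2a + T2b ⊆ A + B := by
            intro x hx
            obtain ⟨y, hy, z, hz, rfl⟩ := Finset.mem_add.mp hx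
            have hyA : y ∈ A := (Finset.mem_inter.mp hy).1
            have hyAg : y - g ∈ A := (hmemAg y).mp (Finset.mem_inter.mp hy).2
            rcases Finset.mem_union.mp hz with hz | hz
            · exact Finset.add_mem_add hyA hz
            · have hzB : z + g ∈ B := (hmemBg z).mp hz
              have : (y - g) + (z + g) = y + z := by abel
              exact this ▸ Finset.add_mem_add hyAg hzB
          have hid1 : #T1a + #T2a = #A + #A := by
            rw [hT1a, hT2a]
            rw [Finset.card_union_add_card_inter, hcardAg]
          have hid2 : #T1b + #T2b = #B + #B := by
            rw [hT1b, hT2b]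
            rw [Finset.card_inter_add_card_union, hcardBg]
          have hT1acard : #T1a ≤ m := Finset.card_le_univ _
          have hT2acard : #T2a ≤ m := Finset.card_le_univ _
          have hT1bcard : #T1b ≤ m := Finset.card_le_univ _
          have hT2bcard : #T2b ≤ m := Finset.card_le_univ _
          have hT1sumcard : #(T1a + T1b) ≤ #(A + B) := Finset.card_le_card hT1sub
          have hT2sumcard : #(T2a + T2b) ≤ #(A + B) := Finset.card_le_card hT2sub
          by_cases hdich : #A + #B ≤ #T2a + #T2b
          · -- recurse on T2
            have hμ' : #(T2a + T2b) * ((2 * m + 2) * (2 * m + 2)) +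
                (2 * m - (#T2a + #T2b)) * (2 * m + 2) + #T2a ≤ N := by
              have hlt := lex3_lt (K := 2 * m + 2)
                (p₁ := #(T2a + T2b)) (q₁ := 2 * m - (#T2a + #T2b)) (r₁ := #T2a)
                (p₂ := #(A + B)) (q₂ := 2 * m - (#A + #B)) (r₂ := #A)
                (by omega) (by omega) (by omega)
              omega
            have hwita : a₀ + g ∈ T2a := by
              refine Finset.mem_inter.mpr ⟨hgA, (hmemAg _).mpr ?_⟩
              simpa using ha₀
            have hwitb : b₀ - g ∈ T2b := by
              refine Finset.mem_union_right _ ((hmemBg _).mpr ?_)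
              simpa [sub_add_cancel] using hb₀
            have hsum' : (a₀ + g) + (b₀ - g) = c := by rw [← hc]; abel
            have huniq' : ∀ x ∈ T2a, ∀ y ∈ T2b, x + y = c → x = a₀ + g ∧ y = b₀ - g := by
              intro x hx y hy hxy
              have hxA : x ∈ A := (Finset.mem_inter.mp hx).1
              have hxAg : x - g ∈ A := (hmemAg x).mp (Finset.mem_inter.mp hx).2
              rcases Finset.mem_union.mp hy with hyB | hyBg
              · exfalso
                have := (huniq x hxA y hyB hxy).1
                rw [this] at hxAg
                exact hA'g hxAg
              · have hyB : y + g ∈ B := (hmemBg y).mp hyBg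
                have hsum2 : (x - g) + (y + g) = c := by rw [← hxy]; abel
                obtain ⟨e1, e2⟩ := huniq _ hxAg _ hyB hsum2
                constructor
                · rw [← e1]; abel
                · rw [← e2]; abel
            have := ihN T2a T2b c (a₀ + g) (b₀ - g) hμ' hwita hwitb hsum' huniq'
            omega
          · -- recurse on T1
            push_neg at hdich
            have hμ' : #(T1a + T1b) * ((2 * m + 2) * (2 * m + 2)) +
                (2 * m - (#T1a + #T1b)) * (2 * m + 2) + #T1a ≤ N := by
              have hlt := lex3_lt (K := 2 * m + 2)
                (p₁ := #(T1a + T1b)) (q₁ := 2 * m - (#T1a + #T1b)) (r₁ := #T1a)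
                (p₂ := #(A + B)) (q₂ := 2 * m - (#A + #B)) (r₂ := #A)
                (by omega) (by omega) (by omega)
              omega
            have hwita : a₀ ∈ T1a := Finset.mem_union_left _ ha₀
            have hwitb : b₀ ∈ T1b := by
              refine Finset.mem_inter.mpr ⟨hb₀, (hmemBg _).mpr hgB⟩
            have huniq' : ∀ x ∈ T1a, ∀ y ∈ T1b, x + y = c → x = a₀ ∧ y = b₀ := by
              intro x hx y hy hxy
              have hyB : y ∈ B := (Finset.mem_inter.mp hy).1
              rcases Finset.mem_union.mp hx with hxA | hxAg
              · exact huniq x hxA y hyB hxy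
              · exfalso
                have hxA : x - g ∈ A := (hmemAg x).mp hxAg
                have hyg : y + g ∈ B := (hmemBg y).mp (Finset.mem_inter.mp hy).2
                have hsum2 : (x - g) + (y + g) = c := by rw [← hxy]; abel
                have := (huniq _ hxA _ hyg hsum2).2
                have : y = b₀ - g := by rw [← this]; abel
                rw [this] at hyB
                exact hB'g hyB
            have := ihN T1a T1b c a₀ b₀ hμ' hwita hwitb hc huniq'
            omega

private theorem scherk {G : Type u} [AddCommGroup G] [Fintype G] [DecidableEq G]
    {A B : Finset G} {c a₀ b₀ : G} (ha₀ : a₀ ∈ A) (hb₀ : b₀ ∈ B) (hc : a₀ + b₀ = c)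
    (huniq : ∀ a ∈ A, ∀ b ∈ B, a + b = c → a = a₀ ∧ b = b₀) :
    A.card + #B ≤ #(A + B) + 1 :=
  scherk_rec (Fintype.card G) G le_rfl _ A B c a₀ b₀ le_rfl ha₀ hb₀ hc huniq

section Layers

variable {G : Type u} [AddCommGroup G] [DecidableEq G]

private def chainF (layer : ℕ → Finset G) : ℕ → Finset G
  | 0 => {0}
  | h + 1 => insert 0 (layer h) + chainF layer h

private def SelF (layer : ℕ → Finset G) : ℕ → Multiset G → Prop
  | 0, T => T = 0
  | h + 1, T => ∃ T', SelF layer h T' ∧ (T = T' ∨ ∃ a ∈ layer h, T = a ::ₘ T')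

private lemma selF_card (layer : ℕ → Finset G) :
    ∀ (h : ℕ) (T : Multiset G), SelF layer h T → Multiset.card T ≤ h := by
  intro h
  induction h with
  | zero => intro T hT; rw [hT]; simp
  | succ h ih =>
    rintro T ⟨T', hT', hor⟩
    rcases hor with rfl | ⟨a, _, rfl⟩
    · exact (ih _ hT').trans (Nat.le_succ h)
    · rw [Multiset.card_cons]
      exact Nat.add_le_add_right (ih _ hT') 1

private lemma selF_count (layer : ℕ → Finset G) :
    ∀ (h : ℕ) (T : Multiset G), SelF layer h T → ∀ a : G,
      T.count a ≤ #((Finset.range h).filter (fun j => a ∈ layer j)) := by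
  intro h
  induction h with
  | zero => intro T hT a; rw [hT]; simp
  | succ h ih =>
    rintro T ⟨T', hT', hor⟩ a
    have hmono : #((Finset.range h).filter (fun j => a ∈ layer j))
        ≤ #((Finset.range (h + 1)).filter (fun j => a ∈ layer j)) :=
      Finset.card_le_card (Finset.filter_subset_filter _
        (Finset.range_subset_range.mpr (Nat.le_succ h)))
    rcases hor with rfl | ⟨b, hb, rfl⟩
    · exact (ih _ hT' a).trans hmono
    · rw [Multiset.count_cons]
      have hbound := ih _ hT' a
      by_cases hab : a = b
      · subst hab
        have hstep : #((Finset.range (h+1)).filter (fun j => a ∈ layer j))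
            = #((Finset.range h).filter (fun j => a ∈ layer j)) + 1 := by
          rw [Finset.range_add_one, Finset.filter_insert, if_pos hb,
            Finset.card_insert_of_notMem (by simp)]
        simp only [if_pos rfl]
        rw [hstep]
        simp only [if_true]
        omega
      · simp only [if_neg hab, add_zero]
        exact hbound.trans hmono

private lemma zero_mem_chainF (layer : ℕ → Finset G) :
    ∀ h : ℕ, (0 : G) ∈ chainF layer h := by
  intro h
  induction h with
  | zero => simp [chainF]
  | succ h ih =>
    have : (0 : G) + 0 = 0 := by simp
    exact this ▸ Finset.add_mem_add (Finset.mem_insert_self 0 _) ih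

private lemma chainF_sum_exists (layer : ℕ → Finset G) :
    ∀ h : ℕ, ∀ x ∈ chainF layer h, ∃ T, SelF layer h T ∧ T.sum = x := by
  intro h
  induction h with
  | zero =>
    intro x hx
    rw [chainF, Finset.mem_singleton] at hx
    exact ⟨0, rfl, by simp [hx]⟩
  | succ h ih =>
    intro x hx
    obtain ⟨y, hy, z, hz, rfl⟩ := Finset.mem_add.mp hx
    obtain ⟨T', hT', hTsum⟩ := ih z hz
    rcases Finset.mem_insert.mp hy with rfl | hy
    · exact ⟨T', ⟨T', hT', Or.inl rfl⟩, by rw [hTsum, zero_add]⟩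
    · exact ⟨y ::ₘ T', ⟨T', hT', Or.inr ⟨y, hy, rfl⟩⟩, by rw [Multiset.sum_cons, hTsum]⟩

private lemma chainF_card [Fintype G] (layer : ℕ → Finset G) :
    ∀ h : ℕ, (∀ j < h, (0 : G) ∉ layer j) →
      (¬ ∃ T, SelF layer h T ∧ T ≠ 0 ∧ T.sum = 0) →
      (∑ j ∈ Finset.range h, #(layer j)) + 1 ≤ #(chainF layer h) := by
  intro h
  induction h with
  | zero => intro _ _; simp [chainF]
  | succ h ih =>
    intro h0 hno
    have hno' : ¬ ∃ T, SelF layer h T ∧ T ≠ 0 ∧ T.sum = 0 := by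
      rintro ⟨T, hT, hT0, hTsum⟩
      exact hno ⟨T, ⟨T, hT, Or.inl rfl⟩, hT0, hTsum⟩
    have hih := ih (fun j hj => h0 j (hj.trans (Nat.lt_succ_self h))) hno'
    have h0h : (0 : G) ∉ layer h := h0 h (Nat.lt_succ_self h)
    have huniq : ∀ a ∈ insert 0 (layer h), ∀ b ∈ chainF layer h, a + b = 0 →
        a = 0 ∧ b = 0 := by
      intro a ha b hb hab
      rcases Finset.mem_insert.mp ha with rfl | ha
      · rw [zero_add] at hab; exact ⟨rfl, hab⟩
      · exfalso
        obtain ⟨T, hT, hTsum⟩ := chainF_sum_exists layer h b hb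
        refine hno ⟨a ::ₘ T, ⟨T, hT, Or.inr ⟨a, ha, rfl⟩⟩, Multiset.cons_ne_zero, ?_⟩
        rw [Multiset.sum_cons, hTsum, hab]
    have hscherk := scherk (A := insert 0 (layer h)) (B := chainF layer h)
      (c := 0) (a₀ := 0) (b₀ := 0)
      (Finset.mem_insert_self 0 _) (zero_mem_chainF layer h) (by simp) huniq
    rw [Finset.card_insert_of_notMem h0h] at hscherk
    rw [Finset.sum_range_succ]
    show _ ≤ #(insert 0 (layer h) + chainF layer h)
    omega

private lemma exists_selF_zero_sum [Fintype G] (layer : ℕ → Finset G) (h : ℕ)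
    (h0 : ∀ j < h, (0 : G) ∉ layer j)
    (hmass : Fintype.card G ≤ ∑ j ∈ Finset.range h, #(layer j)) :
    ∃ T, SelF layer h T ∧ T ≠ 0 ∧ T.sum = 0 := by
  by_contra hno
  have h1 := chainF_card layer h h0 hno
  have h2 : #(chainF layer h) ≤ Fintype.card G := Finset.card_le_univ _
  omega

end Layers

private lemma short_zero_sum {G : Type u} [AddCommGroup G] [Fintype G] [DecidableEq G]
    (S : Multiset G) (h : ℕ) (hcount : ∀ a : G, S.count a ≤ h) (h0 : (0 : G) ∉ S)
    (hbig : Fintype.card G ≤ Multiset.card S) :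
    ∃ T : Multiset G, T ≤ S ∧ T ≠ 0 ∧ Multiset.card T ≤ h ∧ T.sum = 0 := by
  classical
  set layer : ℕ → Finset G := fun j => S.toFinset.filter (fun a => j < S.count a) with hlayer
  have hmem : ∀ j a, a ∈ layer j ↔ j < S.count a := by
    intro j a
    simp only [hlayer, Finset.mem_filter, Multiset.mem_toFinset]
    constructor
    · exact fun ha => ha.2
    · intro ha
      exact ⟨by rw [← Multiset.count_pos]; omega, ha⟩
  have hfilter : ∀ a : G, (Finset.range h).filter (fun j => a ∈ layer j)
      = Finset.range (S.count a) := by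
    intro a
    ext j
    simp only [Finset.mem_filter, Finset.mem_range, hmem]
    have := hcount a
    omega
  have h0' : ∀ j < h, (0 : G) ∉ layer j := by
    intro j _ hj
    rw [hmem] at hj
    exact h0 (by rw [← Multiset.count_pos]; omega)
  have hmass : Fintype.card G ≤ ∑ j ∈ Finset.range h, #(layer j) := by
    have hswap : ∑ j ∈ Finset.range h, #(layer j) = Multiset.card S := by
      calc ∑ j ∈ Finset.range h, #(layer j)
          = ∑ j ∈ Finset.range h, ∑ a ∈ S.toFinset, (if j < S.count a then 1 else 0) := by
            refine Finset.sum_congr rfl fun j _ => ?_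
            rw [hlayer, Finset.card_filter]
        _ = ∑ a ∈ S.toFinset, ∑ j ∈ Finset.range h, (if j < S.count a then 1 else 0) :=
            Finset.sum_comm
        _ = ∑ a ∈ S.toFinset, S.count a := by
            refine Finset.sum_congr rfl fun a _ => ?_
            rw [← Finset.card_filter]
            have : (Finset.range h).filter (fun j => j < S.count a)
                = Finset.range (S.count a) := by
              ext j
              simp only [Finset.mem_filter, Finset.mem_range]
              have := hcount a
              omega
            rw [this, Finset.card_range]
        _ = Multiset.card S := S.toFinset_sum_count_eq
    omega
  obtain ⟨T, hT, hT0, hTsum⟩ := exists_selF_zero_sum layer h h0' hmass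
  refine ⟨T, ?_, hT0, selF_card layer h T hT, hTsum⟩
  rw [Multiset.le_iff_count]
  intro a
  have := selF_count layer h T hT a
  rw [hfilter, Finset.card_range] at this
  exact this

private lemma egz_translated {G : Type u} [AddCommGroup G] [Fintype G] [DecidableEq G]
    (S : Multiset G) (hmax : ∀ a : G, S.count a ≤ S.count 0)
    (hcard : Fintype.card G + AddMonoid.exponent G = Multiset.card S + 1) :
    ∃ T, T ≤ S ∧ Multiset.card T = AddMonoid.exponent G ∧ T.sum = 0 := by
  classical
  set n := Fintype.card G with hn
  set e := AddMonoid.exponent G with he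
  have hn1 : 0 < n := Fintype.card_pos
  have he1 : e ≠ 0 := AddMonoid.exponent_ne_zero_of_finite
  set h := S.count 0 with hh
  by_cases heh : e ≤ h
  · refine ⟨Multiset.replicate e 0, ?_, Multiset.card_replicate _ _, by simp⟩
    rw [Multiset.le_iff_count]
    intro a
    rw [Multiset.count_replicate]
    split
    · next hae => subst hae; exact heh
    · exact Nat.zero_le _
  · push_neg at heh
    set S₁ := S.filter (fun a => ¬ a = 0) with hS₁
    have hS₁0 : (0 : G) ∉ S₁ := by
      intro hmem
      exact (Multiset.of_mem_filter hmem) rfl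
    have hS₁count : ∀ a : G, S₁.count a ≤ h := by
      intro a
      rw [hS₁, Multiset.count_filter]
      split
      · next ha => exact (hmax a)
      · exact Nat.zero_le _
    have hS₁le : S₁ ≤ S := Multiset.filter_le _ S
    have hS₁card : Multiset.card S₁ + h = Multiset.card S := by
      have hsplit := Multiset.filter_add_not (fun a => ¬ a = 0) S
      have hcards := congrArg Multiset.card hsplit
      rw [Multiset.card_add] at hcards
      have heq2 : S.filter (fun a => ¬¬ a = 0) = S.filter (fun a => a = 0) := by
        apply Multiset.filter_congr
        intro a _
        constructor
        · exact not_not.mp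
        · exact not_not.mpr
      rw [heq2, Multiset.filter_eq', Multiset.card_replicate] at hcards
      rw [hS₁, hh]
      exact hcards
    -- greedy accumulation
    have greedy : ∀ d : ℕ, ∀ U : Multiset G, U ≤ S₁ → U.sum = 0 →
        Multiset.card U + h + 1 ≤ e → e ≤ Multiset.card U + h + d →
        ∃ U', U' ≤ S₁ ∧ U'.sum = 0 ∧ e ≤ Multiset.card U' + h ∧ Multiset.card U' ≤ e := by
      intro d
      induction d with
      | zero => intro U _ _ _ _; omega
      | succ d ih =>
        intro U hU hUsum hUsmall hUbudget
        set R := S₁ - U with hR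
        have hRle : R ≤ S₁ := tsub_le_self
        have hRcard : Multiset.card R + Multiset.card U = Multiset.card S₁ := by
          have h2 := congrArg Multiset.card (tsub_add_cancel_of_le hU)
          rw [Multiset.card_add] at h2
          rw [← hR] at h2
          exact h2
        have hRbig : n ≤ Multiset.card R := by omega
        have hRcount : ∀ a : G, R.count a ≤ h :=
          fun a => (Multiset.count_le_of_le a hRle).trans (hS₁count a)
        have hR0 : (0 : G) ∉ R := fun hmem => hS₁0 (Multiset.mem_of_le hRle hmem)
        obtain ⟨V, hVR, hV0, hVcard, hVsum⟩ := short_zero_sum R h hRcount hR0 hRbig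
        have hV1 : 1 ≤ Multiset.card V := by
          rw [Nat.one_le_iff_ne_zero]
          simpa using hV0
        have hU' : U + V ≤ S₁ := by
          calc U + V ≤ U + (S₁ - U) := add_le_add (le_refl U) hVR
            _ = S₁ := add_tsub_cancel_of_le hU
        have hU'sum : (U + V).sum = 0 := by rw [Multiset.sum_add, hUsum, hVsum, add_zero]
        have hU'card : Multiset.card (U + V) = Multiset.card U + Multiset.card V :=
          Multiset.card_add U V
        by_cases hdone : e ≤ Multiset.card (U + V) + h
        · exact ⟨U + V, hU', hU'sum, hdone, by omega⟩
        · exact ih (U + V) hU' hU'sum (by omega) (by omega)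
    obtain ⟨U, hUle, hUsum, hUlow, hUhigh⟩ := greedy e 0 (zero_le) rfl (by simp only [Multiset.card_zero]; omega)
      (by simp only [Multiset.card_zero]; omega)
    refine ⟨U + Multiset.replicate (e - Multiset.card U) 0, ?_, ?_, ?_⟩
    · rw [Multiset.le_iff_count]
      intro a
      rw [Multiset.count_add, Multiset.count_replicate]
      by_cases ha : a = 0
      · subst ha
        have hU0 : U.count 0 = 0 := by
          rw [Multiset.count_eq_zero]
          exact fun hmem => hS₁0 (Multiset.mem_of_le hUle hmem)
        rw [hU0, if_pos rfl]
        omega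
      · rw [if_neg (fun he => ha he.symm), add_zero]
        exact (Multiset.count_le_of_le a hUle).trans
          ((Multiset.count_le_of_le a hS₁le))
    · rw [Multiset.card_add, Multiset.card_replicate]
      omega
    · rw [Multiset.sum_add, hUsum, Multiset.sum_replicate, zero_add, smul_zero]

private theorem egz_main {G : Type u} [AddCommGroup G] [Fintype G]
    (S : Multiset G) (hcard : Multiset.card S + 1 = Fintype.card G + AddMonoid.exponent G) :
    ∃ T, T ≤ S ∧ Multiset.card T = AddMonoid.exponent G ∧ T.sum = 0 := by
  classical
  have hn1 : 0 < Fintype.card G := Fintype.card_pos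
  have he1 : AddMonoid.exponent G ≠ 0 := AddMonoid.exponent_ne_zero_of_finite
  have hSne : S ≠ 0 := by
    intro h0
    rw [h0] at hcard
    simp at hcard
    omega
  obtain ⟨g, hgS, hgmax⟩ := S.toFinset.exists_max_image (fun a => S.count a)
    (Multiset.toFinset_nonempty.mpr hSne)
  have hgmax' : ∀ a : G, S.count a ≤ S.count g := by
    intro a
    by_cases ha : a ∈ S
    · exact hgmax a (Multiset.mem_toFinset.mpr ha)
    · rw [Multiset.count_eq_zero_of_notMem ha]
      exact Nat.zero_le _
  set S' := S.map (fun x => x - g) with hS'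
  have hcount' : ∀ a : G, S'.count a = S.count (a + g) := by
    intro a
    have h2 := Multiset.count_map_eq_count' (fun x => x - g) S sub_left_injective (a + g)
    simpa [hS'] using h2
  have hmax' : ∀ a : G, S'.count a ≤ S'.count 0 := by
    intro a
    rw [hcount', hcount', zero_add]
    exact hgmax' (a + g)
  have hcard' : Fintype.card G + AddMonoid.exponent G = Multiset.card S' + 1 := by
    rw [hS', Multiset.card_map]
    omega
  obtain ⟨T', hT'le, hT'card, hT'sum⟩ := egz_translated S' hmax' hcard'
  refine ⟨T'.map (fun x => x + g), ?_, ?_, ?_⟩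
  · rw [Multiset.le_iff_count]
    intro a
    have h1 : (T'.map (fun x => x + g)).count a = T'.count (a - g) := by
      have h2 := Multiset.count_map_eq_count' (fun x => x + g) T' (add_left_injective g) (a - g)
      simpa using h2
    rw [h1]
    calc T'.count (a - g) ≤ S'.count (a - g) := Multiset.count_le_of_le _ hT'le
      _ = S.count (a - g + g) := hcount' _
      _ = S.count a := by rw [sub_add_cancel]
  · rw [Multiset.card_map]
    exact hT'card
  · have hsum : (T'.map (fun x => x + g)).sum = T'.sum + Multiset.card T' • g := by
      have h2 : T'.map (fun x => x + g) = T'.map (fun x => id x + (fun _ => g) x) := rfl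
      rw [h2, Multiset.sum_map_add]
      congr 1
      · rw [Multiset.map_id]
      · rw [Multiset.map_const', Multiset.sum_replicate]
    rw [hsum, hT'sum, hT'card, zero_add, AddMonoid.exponent_nsmul_eq_zero]



/-- `s(G) ≤ |G| + exp(G) - 1`. -/
theorem stmt_4 (G : Type*) [AddCommGroup G] [Fintype G] (s : ℕ)
    (hs : IsEGZConst G (AddMonoid.exponent G) s) :
    s ≤ Fintype.card G + AddMonoid.exponent G - 1 := by
  have hn : 0 < Fintype.card G := Fintype.card_pos
  have he : AddMonoid.exponent G ≠ 0 := AddMonoid.exponent_ne_zero_of_finite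
  refine hs.2 ⟨by omega, ?_⟩
  intro S hS
  exact egz_main S (by omega)
end

section
/- Let G be a finite abelian group, let r ≥ 2, and let m be a positive multiple of exp(G). Let n be the least positive integer such that C(n-1, r-1) ≥ s_m(G). Then for every coloring c of the r-element subsets of an n-element vertex set V by elements of G, there exists a vertex v ∈ V and a family of m distinct r-subsets of V, all containing v, whose color sum is zero in G. -/
open Finset

private lemma exists_le_of_le_map {α β : Type*} [DecidableEq β] {f : α → β}
    {S : Multiset α} {T : Multiset β} (h : T ≤ S.map f) :
    ∃ S' ≤ S, S'.map f = T := by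
  induction S using Multiset.induction generalizing T with
  | empty =>
    simp only [Multiset.map_zero, Multiset.le_zero] at h
    exact ⟨0, le_rfl, by simp [h]⟩
  | cons a S ih =>
    rw [Multiset.map_cons] at h
    by_cases hfa : f a ∈ T
    · have h' : T.erase (f a) ≤ S.map f := by
        have := Multiset.erase_le_erase (f a) h
        rwa [Multiset.erase_cons_head] at this
      obtain ⟨S', hS', hmap⟩ := ih h'
      exact ⟨a ::ₘ S', Multiset.cons_le_cons a hS',
        by rw [Multiset.map_cons, hmap, Multiset.cons_erase hfa]⟩
    · have h' : T ≤ S.map f := by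
        rw [Multiset.le_iff_count] at h ⊢
        intro b
        rcases eq_or_ne b (f a) with rfl | hb
        · simp [Multiset.count_eq_zero_of_notMem hfa]
        · have := h b
          rwa [Multiset.count_cons_of_ne hb] at this
      obtain ⟨S', hS', hmap⟩ := ih h'
      exact ⟨S', le_trans hS' (Multiset.le_cons_self S a), hmap⟩

/-- Upper bound `R(S_m^{(r)}, G) ≤ Ω(s_m(G))`: every `G`-coloring of the `r`-subsets of
an `n`-element set yields a zero-sum hyperstar with `m` edges. -/
theorem stmt_8 (G : Type*) [AddCommGroup G] [Fintype G] (r m s n : ℕ)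
    (hr : 2 ≤ r) (hm : 0 < m) (hexp : AddMonoid.exponent G ∣ m)
    (hs : IsEGZConst G m s)
    (hn : IsLeast {n : ℕ | 0 < n ∧ s ≤ (n - 1).choose (r - 1)} n)
    (c : Finset (Fin n) → G) :
    HasZeroSumStar G r m n c := by
  obtain ⟨⟨hn0, hns⟩, -⟩ := hn
  set v : Fin n := ⟨0, hn0⟩ with hv
  classical
  set A : Finset (Finset (Fin n)) := Finset.powersetCard (r - 1) (Finset.univ.erase v)
    with hA
  have hAmem : ∀ a ∈ A, v ∉ a ∧ a.card = r - 1 := by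
    intro a ha
    rw [hA, Finset.mem_powersetCard] at ha
    exact ⟨fun hva => (Finset.mem_erase.mp (ha.1 hva)).1 rfl, ha.2⟩
  set edges : Finset (Finset (Fin n)) := A.image (insert v) with hedges
  have hinj : ∀ a ∈ A, ∀ b ∈ A, insert v a = insert v b → a = b := by
    intro a ha b hb hab
    have h1 := (hAmem a ha).1
    have h2 := (hAmem b hb).1
    rw [← Finset.erase_insert h1, ← Finset.erase_insert h2, hab]
  have hcardE : edges.card = (n - 1).choose (r - 1) := by
    rw [hedges, Finset.card_image_of_injOn hinj, hA, Finset.card_powersetCard,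
      Finset.card_erase_of_mem (Finset.mem_univ v), Finset.card_univ, Fintype.card_fin]
  have hEmem : ∀ e ∈ edges, e.card = r ∧ v ∈ e := by
    intro e he
    rw [hedges, Finset.mem_image] at he
    obtain ⟨a, ha, rfl⟩ := he
    obtain ⟨hva, hca⟩ := hAmem a ha
    constructor
    · rw [Finset.card_insert_of_notMem hva, hca]
      omega
    · exact Finset.mem_insert_self v a
  -- pick a subfamily of size s
  obtain ⟨E₀, hE₀sub, hE₀card⟩ := Finset.exists_subset_card_eq (hns.trans hcardE.ge)
  -- apply the EGZ constant
  obtain ⟨T, hTle, hTcard, hTsum⟩ := hs.1.2 (E₀.val.map c)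
    (by rw [Multiset.card_map]; exact_mod_cast hE₀card)
  obtain ⟨E', hE'le, hE'map⟩ := exists_le_of_le_map hTle
  have hE'nodup : E'.Nodup := Multiset.nodup_of_le hE'le E₀.nodup
  refine ⟨v, ⟨E', hE'nodup⟩, ?_, ?_, ?_⟩
  · have : Multiset.card E' = m := by
      rw [← hTcard, ← hE'map, Multiset.card_map]
    simpa [Finset.card] using this
  · intro e he
    have heE₀ : e ∈ E₀ := Multiset.mem_of_le hE'le he
    exact hEmem e (hE₀sub heE₀)
  · have : ∑ e ∈ (⟨E', hE'nodup⟩ : Finset (Finset (Fin n))), c e = (E'.map c).sum := by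
      rfl
    rw [this, hE'map, hTsum]
end

section
/- Let G be a finite abelian group, let r ≥ 2, and let m be a positive multiple of exp(G). Let n be the least positive integer such that C(n-1, r-1) ≥ s_m(G). Then there exists a coloring c of the r-element subsets of an (n-2)-element vertex set by elements of G such that no family of m distinct r-subsets with pairwise nonempty intersections has color sum zero in G. In other words, R(I_m^{(r)}, G) ≥ n - 1. -/
open Finset

/-- Invariant for the staged construction of a partition of the `r`-subsets
of `Fin d` into `N` matchings (a weak form of Baranyai's theorem). -/
structure BInv (d r N s : ℕ) (M : Fin N → Multiset (Finset (Fin d))) : Prop where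
  mem_lt : ∀ i, ∀ A ∈ M i, ∀ x ∈ A, (x : ℕ) < s
  card_le : ∀ i, ∀ A ∈ M i, A.card ≤ r
  disj : ∀ i, ∀ A ∈ M i, ∀ B ∈ M i, A ≠ B → Disjoint A B
  mult : ∀ i (A : Finset (Fin d)), A ≠ ∅ → (M i).count A ≤ 1
  wsum : ∀ i, ((M i).map (fun A => r - A.card)).sum ≤ d - s
  total : ∀ A : Finset (Fin d), A.card ≤ r → (∀ x ∈ A, (x : ℕ) < s) →
    (∑ i, (M i).count A) = Nat.choose (d - s) (r - A.card)

lemma card_filter_coe_lt (N v : ℕ) (h : v ≤ N) :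
    ((Finset.univ : Finset (Fin N)).filter (fun i : Fin N => (i : ℕ) < v)).card = v := by
  have h' : ∀ m ∈ Finset.range v, m < N := fun m hm =>
    lt_of_lt_of_le (Finset.mem_range.mp hm) h
  have : (Finset.univ : Finset (Fin N)).filter (fun i : Fin N => (i : ℕ) < v)
      = (Finset.range v).attachFin h' := by
    ext i
    simp [Finset.mem_attachFin]
  rw [this, Finset.card_attachFin, Finset.card_range]

lemma binv_base (d r N : ℕ) (hN : Nat.choose d r ≤ N * (d / r)) :
    ∃ M, BInv d r N 0 M := by
  classical
  set T := Nat.choose d r with hT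
  set q := d / r with hq
  set a : Fin N → ℕ := fun i => T / N + (if (i : ℕ) < T % N then 1 else 0) with ha
  have haq : ∀ i : Fin N, a i ≤ q := by
    intro i
    have hNpos : 0 < N := i.pos
    have hdm : N * (T / N) + T % N = T := Nat.div_add_mod T N
    have hu : T / N ≤ q := by
      have := Nat.div_le_div_right (c := N) hN
      rwa [Nat.mul_div_cancel_left q hNpos] at this
    rcases eq_or_lt_of_le hu with heq | hlt
    · have hmod : T % N = 0 := by
        have h2 : N * q + T % N ≤ N * q := by
          calc N * q + T % N = N * (T / N) + T % N := by rw [heq]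
          _ = T := hdm
          _ ≤ N * q := hN
        omega
      have : a i = T / N := by simp [ha, hmod]
      omega
    · have : a i ≤ T / N + 1 := by
        simp only [ha]; split <;> omega
      omega
  refine ⟨fun i => Multiset.replicate (a i) ∅, ?_, ?_, ?_, ?_, ?_, ?_⟩
  · intro i A hA x hx
    rw [Multiset.eq_of_mem_replicate hA] at hx
    exact absurd hx (Finset.notMem_empty x)
  · intro i A hA
    rw [Multiset.eq_of_mem_replicate hA]; simp
  · intro i A hA B hB hne
    rw [Multiset.eq_of_mem_replicate hA, Multiset.eq_of_mem_replicate hB] at hne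
    exact absurd rfl hne
  · intro i A hA
    rw [Multiset.count_replicate]
    split
    · next h => exact absurd h.symm hA
    · exact Nat.zero_le _
  · intro i
    rw [Multiset.map_replicate, Multiset.sum_replicate]
    simp only [Finset.card_empty, Nat.sub_zero, smul_eq_mul, Nat.sub_zero]
    calc a i * r ≤ q * r := Nat.mul_le_mul_right r (haq i)
    _ ≤ d := by rw [hq]; exact Nat.div_mul_le_self d r
  · intro A hcard hmem
    have hA : A = ∅ := by
      by_contra h
      obtain ⟨x, hx⟩ := Finset.nonempty_iff_ne_empty.mpr h
      exact absurd (hmem x hx) (by omega)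
    subst hA
    simp only [Multiset.count_replicate_self]
    have hsum : (∑ i : Fin N, a i) = T := by
      rcases Nat.eq_zero_or_pos N with h0 | hNpos
      · subst h0
        simp only [Finset.univ_eq_empty, Finset.sum_empty]
        omega
      · have hmodlt : T % N < N := Nat.mod_lt T hNpos
        rw [ha]
        rw [Finset.sum_add_distrib, Finset.sum_const, Finset.card_univ, Fintype.card_fin]
        rw [← Finset.card_filter]
        rw [card_filter_coe_lt N (T % N) (le_of_lt hmodlt)]
        rw [smul_eq_mul]
        exact Nat.div_add_mod T N
    rw [hsum]
    simp [hT]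

lemma binv_step (d r N s : ℕ) (hsd : s < d)
    (M : Fin N → Multiset (Finset (Fin d))) (h : BInv d r N s M) :
    ∃ M', BInv d r N (s + 1) M' := by
  classical
  set D := d - s with hD
  have hD1 : 1 ≤ D := by omega
  set v : Fin d := ⟨s, hsd⟩ with hv
  set t : Finset (Fin d) → ℕ := fun A =>
    if A.card < r ∧ (∀ x ∈ A, (x : ℕ) < s) then Nat.choose (D - 1) (r - A.card - 1) else 0
    with ht
  set w : Fin N → ℕ := fun i => ((M i).map (fun A => r - A.card)).sum with hw
  have hwD : ∀ i, w i ≤ D := fun i => h.wsum i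
  have hcount_zero : ∀ (i : Fin N) (A : Finset (Fin d)),
      ¬(A.card ≤ r ∧ (∀ x ∈ A, (x : ℕ) < s)) → (M i).count A = 0 := by
    intro i A hA
    rw [Multiset.count_eq_zero]
    intro hmem
    exact hA ⟨h.card_le i A hmem, h.mem_lt i A hmem⟩
  have K1 : ∀ A : Finset (Fin d), D * t A = (∑ i, (M i).count A) * (r - A.card) := by
    intro A
    by_cases hg : A.card < r ∧ (∀ x ∈ A, (x : ℕ) < s)
    · rw [ht]; simp only [if_pos hg]
      rw [h.total A (le_of_lt hg.1) hg.2]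
      have hid := Nat.add_one_mul_choose_eq (D - 1) (r - A.card - 1)
      have e1 : D - 1 + 1 = D := by omega
      have e2 : r - A.card - 1 + 1 = r - A.card := by omega
      rw [e1, e2] at hid
      exact hid
    · rw [ht]; simp only [if_neg hg, Nat.mul_zero]
      by_cases hc : A.card ≤ r ∧ (∀ x ∈ A, (x : ℕ) < s)
      · have hcr : ¬ A.card < r := fun hlt => hg ⟨hlt, hc.2⟩
        have : r - A.card = 0 := by omega
        rw [this, Nat.mul_zero]
      · rw [Finset.sum_congr rfl (fun i _ => hcount_zero i A hc)]
        simp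
  set tot : ℕ := ∑ A : Finset (Fin d), t A with htot
  have wsum_filter : ∀ i : Fin N,
      w i = ∑ A ∈ (M i).toFinset.filter (fun A => A.card < r), (M i).count A * (r - A.card) := by
    intro i
    simp only [hw]
    rw [Finset.sum_multiset_map_count]
    simp only [smul_eq_mul]
    rw [Finset.sum_filter_of_ne]
    intro A hA hne
    by_contra hcr
    have hAr : A.card = r := le_antisymm (h.card_le i A (Multiset.mem_toFinset.mp hA)) (by omega)
    rw [hAr] at hne
    simp at hne
  have K2 : ∑ i : Fin N, w i = D * tot := by
    have step1 : ∀ i : Fin N, w i = ∑ A : Finset (Fin d), (M i).count A * (r - A.card) := by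
      intro i
      rw [wsum_filter i]
      apply Finset.sum_subset (Finset.subset_univ _)
      intro A _ hA
      by_cases hm : A ∈ M i
      · have hcr : ¬ A.card < r := by
          intro hlt
          exact hA (Finset.mem_filter.mpr ⟨Multiset.mem_toFinset.mpr hm, hlt⟩)
        have : A.card = r := le_antisymm (h.card_le i A hm) (by omega)
        rw [this]
        simp
      · rw [Multiset.count_eq_zero_of_notMem hm, Nat.zero_mul]
    calc ∑ i : Fin N, w i
        = ∑ i : Fin N, ∑ A : Finset (Fin d), (M i).count A * (r - A.card) :=
          Finset.sum_congr rfl (fun i _ => step1 i)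
      _ = ∑ A : Finset (Fin d), ∑ i : Fin N, (M i).count A * (r - A.card) := Finset.sum_comm
      _ = ∑ A : Finset (Fin d), (∑ i : Fin N, (M i).count A) * (r - A.card) := by
          refine Finset.sum_congr rfl (fun A _ => ?_)
          rw [Finset.sum_mul]
      _ = ∑ A : Finset (Fin d), D * t A :=
          Finset.sum_congr rfl (fun A _ => (K1 A).symm)
      _ = D * tot := by rw [htot, Finset.mul_sum]
  have K3 : tot ≤ N := by
    have h1 : D * tot ≤ N * D := by
      rw [← K2]
      calc ∑ i : Fin N, w i ≤ ∑ _i : Fin N, D := Finset.sum_le_sum (fun i _ => hwD i)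
        _ = N * D := by rw [Finset.sum_const, Finset.card_univ, Fintype.card_fin, smul_eq_mul]
    rw [Nat.mul_comm N D] at h1
    exact Nat.le_of_mul_le_mul_left h1 (by omega)
  set dc : ℕ := N - tot with hdc
  -- The Hall bipartite setup
  set units : Finset (Fin d) → Finset (Finset (Fin d) × ℕ ⊕ ℕ) := fun A =>
    (Finset.range (t A)).image (fun k => Sum.inl (A, k)) with hunits
  set dumm : Finset (Finset (Fin d) × ℕ ⊕ ℕ) := (Finset.range dc).image Sum.inr with hdumm
  set ts : Fin N → Finset (Finset (Fin d) × ℕ ⊕ ℕ) := fun i =>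
    ((M i).toFinset.filter (fun A => A.card < r)).biUnion units ∪ (if w i < D then dumm else ∅)
    with hts
  have units_card : ∀ A, (units A).card = t A := by
    intro A
    rw [hunits]
    rw [Finset.card_image_of_injective _ (fun k k' hk => by simpa using hk), Finset.card_range]
  have mem_units : ∀ (A : Finset (Fin d)) (x), x ∈ units A ↔ ∃ k < t A, x = Sum.inl (A, k) := by
    intro A x
    rw [hunits]
    rw [Finset.mem_image]
    constructor
    · rintro ⟨k, hk, rfl⟩; exact ⟨k, Finset.mem_range.mp hk, rfl⟩
    · rintro ⟨k, hk, rfl⟩; exact ⟨k, Finset.mem_range.mpr hk, rfl⟩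
  have units_disj : ∀ A B : Finset (Fin d), A ≠ B → Disjoint (units A) (units B) := by
    intro A B hne
    rw [Finset.disjoint_left]
    intro x hxA hxB
    rw [mem_units] at hxA hxB
    obtain ⟨k, _, rfl⟩ := hxA
    obtain ⟨k', _, heq⟩ := hxB
    simp only [Sum.inl.injEq, Prod.mk.injEq] at heq
    exact hne heq.1
  set totalR : Finset (Finset (Fin d) × ℕ ⊕ ℕ) := (Finset.univ.biUnion units) ∪ dumm with htotalR
  have biUnion_units_card : ∀ (S : Finset (Finset (Fin d))),
      (S.biUnion units).card = ∑ A ∈ S, t A := by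
    intro S
    rw [Finset.card_biUnion (fun A _ B _ hne => units_disj A B hne)]
    exact Finset.sum_congr rfl (fun A _ => units_card A)
  have disj_units_dumm : ∀ S : Finset (Finset (Fin d)), Disjoint (S.biUnion units) dumm := by
    intro S
    rw [Finset.disjoint_left]
    intro x hxU hxD
    rw [Finset.mem_biUnion] at hxU
    obtain ⟨A, _, hxA⟩ := hxU
    rw [mem_units] at hxA
    obtain ⟨k, _, rfl⟩ := hxA
    rw [hdumm, Finset.mem_image] at hxD
    obtain ⟨j, _, hj⟩ := hxD
    exact Sum.inr_ne_inl hj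
  have dumm_card : dumm.card = dc := by
    rw [hdumm, Finset.card_image_of_injective _ Sum.inr_injective, Finset.card_range]
  have totalR_card : totalR.card = N := by
    rw [htotalR, Finset.card_union_of_disjoint (disj_units_dumm _), biUnion_units_card,
      dumm_card, ← htot]
    omega
  have ts_sub : ∀ i, ts i ⊆ totalR := by
    intro i
    rw [hts, htotalR]
    apply Finset.union_subset_union
    · exact Finset.biUnion_subset_biUnion_of_subset_left units (Finset.subset_univ _)
    · split
      · exact subset_rfl
      · exact Finset.empty_subset _
  have hall : ∀ W : Finset (Fin N), W.card ≤ (W.biUnion ts).card := by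
    intro W
    set TW := W.biUnion (fun i => (M i).toFinset.filter (fun A => A.card < r)) with hTW
    have H1 : ∑ i ∈ W, w i ≤ D * ∑ A ∈ TW, t A := by
      calc ∑ i ∈ W, w i
          = ∑ i ∈ W, ∑ A ∈ (M i).toFinset.filter (fun A => A.card < r),
              (M i).count A * (r - A.card) := Finset.sum_congr rfl (fun i _ => wsum_filter i)
        _ ≤ ∑ i ∈ W, ∑ A ∈ TW, (M i).count A * (r - A.card) := by
            apply Finset.sum_le_sum
            intro i hi
            apply Finset.sum_le_sum_of_subset
            intro A hA
            rw [hTW, Finset.mem_biUnion]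
            exact ⟨i, hi, hA⟩
        _ = ∑ A ∈ TW, ∑ i ∈ W, (M i).count A * (r - A.card) := Finset.sum_comm
        _ ≤ ∑ A ∈ TW, ∑ i : Fin N, (M i).count A * (r - A.card) := by
            apply Finset.sum_le_sum
            intro A _
            exact Finset.sum_le_sum_of_subset (Finset.subset_univ _)
        _ = ∑ A ∈ TW, (∑ i : Fin N, (M i).count A) * (r - A.card) := by
            refine Finset.sum_congr rfl (fun A _ => ?_)
            rw [Finset.sum_mul]
        _ = ∑ A ∈ TW, D * t A := Finset.sum_congr rfl (fun A _ => (K1 A).symm)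
        _ = D * ∑ A ∈ TW, t A := by rw [Finset.mul_sum]
    have hUsub : TW.biUnion units ⊆ W.biUnion ts := by
      intro x hx
      rw [Finset.mem_biUnion] at hx
      obtain ⟨A, hATW, hxA⟩ := hx
      rw [hTW, Finset.mem_biUnion] at hATW
      obtain ⟨i, hiW, hAi⟩ := hATW
      rw [Finset.mem_biUnion]
      refine ⟨i, hiW, ?_⟩
      rw [hts]
      apply Finset.mem_union_left
      rw [Finset.mem_biUnion]
      exact ⟨A, hAi, hxA⟩
    by_cases htight : ∀ i ∈ W, w i = D
    · have e1 : W.card * D = ∑ i ∈ W, w i := by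
        rw [Finset.sum_congr rfl htight, Finset.sum_const, smul_eq_mul]
      have e3 : W.card ≤ ∑ A ∈ TW, t A := by
        have h' : D * W.card ≤ D * ∑ A ∈ TW, t A := by
          calc D * W.card = W.card * D := Nat.mul_comm _ _
            _ = ∑ i ∈ W, w i := e1
            _ ≤ D * ∑ A ∈ TW, t A := H1
        exact Nat.le_of_mul_le_mul_left h' (by omega)
      calc W.card ≤ ∑ A ∈ TW, t A := e3
        _ = (TW.biUnion units).card := (biUnion_units_card TW).symm
        _ ≤ (W.biUnion ts).card := Finset.card_le_card hUsub
    · push_neg at htight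
      obtain ⟨i0, hi0W, hi0⟩ := htight
      have hi0' : w i0 < D := lt_of_le_of_ne (hwD i0) hi0
      have hdsub : dumm ⊆ W.biUnion ts := by
        intro x hx
        rw [Finset.mem_biUnion]
        refine ⟨i0, hi0W, ?_⟩
        rw [hts]
        apply Finset.mem_union_right
        rw [if_pos hi0']
        exact hx
      have hsubU : TW.biUnion units ∪ dumm ⊆ W.biUnion ts := Finset.union_subset hUsub hdsub
      have cardU : (TW.biUnion units ∪ dumm).card = (∑ A ∈ TW, t A) + dc := by
        rw [Finset.card_union_of_disjoint (disj_units_dumm _), biUnion_units_card, dumm_card]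
      have cardle : (TW.biUnion units ∪ dumm).card ≤ (W.biUnion ts).card :=
        Finset.card_le_card hsubU
      set X := ∑ A ∈ TW, t A with hX
      have e1 : ∑ i ∈ W, w i + ∑ i ∈ W, (D - w i) = W.card * D := by
        rw [← Finset.sum_add_distrib, Finset.sum_congr rfl (fun i (_ : i ∈ W) => by
          have := hwD i; omega : ∀ i ∈ W, w i + (D - w i) = D), Finset.sum_const, smul_eq_mul]
      have e2 : ∑ i ∈ W, (D - w i) ≤ ∑ i : Fin N, (D - w i) :=
        Finset.sum_le_sum_of_subset (Finset.subset_univ _)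
      have e3 : ∑ i : Fin N, w i + ∑ i : Fin N, (D - w i) = N * D := by
        rw [← Finset.sum_add_distrib, Finset.sum_congr rfl (fun i (_ : i ∈ Finset.univ) => by
          have := hwD i; omega : ∀ i ∈ Finset.univ, w i + (D - w i) = D), Finset.sum_const,
          Finset.card_univ, Fintype.card_fin, smul_eq_mul]
      have e4 : D * tot + D * dc = N * D := by
        rw [← Nat.mul_add]
        have : tot + dc = N := by omega
        rw [this, Nat.mul_comm]
      have e5 : ∑ i : Fin N, (D - w i) = D * dc := by omega
      have e6 : W.card * D ≤ D * X + D * dc := by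
        calc W.card * D = ∑ i ∈ W, w i + ∑ i ∈ W, (D - w i) := e1.symm
          _ ≤ D * X + D * dc := by
              have := H1
              omega
      have e7 : W.card ≤ X + dc := by
        have : D * W.card ≤ D * (X + dc) := by
          rw [Nat.mul_add]
          calc D * W.card = W.card * D := Nat.mul_comm _ _
            _ ≤ D * X + D * dc := e6
        exact Nat.le_of_mul_le_mul_left this (by omega)
      calc W.card ≤ X + dc := e7
        _ = (TW.biUnion units ∪ dumm).card := cardU.symm
        _ ≤ (W.biUnion ts).card := cardle
  obtain ⟨f, finj, hf⟩ := (Finset.all_card_le_biUnion_card_iff_exists_injective ts).mp hall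
  have himg : Finset.univ.image f = totalR := by
    apply Finset.eq_of_subset_of_card_le
    · intro x hx
      rw [Finset.mem_image] at hx
      obtain ⟨i, _, rfl⟩ := hx
      exact ts_sub i (hf i)
    · rw [totalR_card, Finset.card_image_of_injective _ finj, Finset.card_univ, Fintype.card_fin]
  have hcnt : ∀ A : Finset (Fin d),
      (Finset.univ.filter (fun i : Fin N => f i ∈ units A)).card = t A := by
    intro A
    have h1 : (Finset.univ.filter (fun i : Fin N => f i ∈ units A)).image f
        = totalR.filter (fun x => x ∈ units A) := by
      rw [← himg, Finset.filter_image]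
    have h2 : totalR.filter (fun x => x ∈ units A) = units A := by
      rw [Finset.filter_mem_eq_inter]
      apply Finset.inter_eq_right.mpr
      intro x hx
      rw [htotalR]
      exact Finset.mem_union_left _ (Finset.mem_biUnion.mpr ⟨A, Finset.mem_univ A, hx⟩)
    calc (Finset.univ.filter (fun i : Fin N => f i ∈ units A)).card
        = ((Finset.univ.filter (fun i : Fin N => f i ∈ units A)).image f).card :=
          (Finset.card_image_of_injective _ finj).symm
      _ = (units A).card := by rw [h1, h2]
      _ = t A := units_card A
  have PF : ∀ i : Fin N,
      (∃ A k, f i = Sum.inl (A, k) ∧ A ∈ M i ∧ A.card < r ∧ k < t A) ∨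
      (∃ j, f i = Sum.inr j ∧ w i < D) := by
    intro i
    have hfi := hf i
    rw [hts] at hfi
    rw [Finset.mem_union] at hfi
    rcases hfi with hl | hr'
    · rw [Finset.mem_biUnion] at hl
      obtain ⟨A, hA, hxA⟩ := hl
      rw [Finset.mem_filter, Multiset.mem_toFinset] at hA
      rw [mem_units] at hxA
      obtain ⟨k, hk, heq⟩ := hxA
      exact Or.inl ⟨A, k, heq, hA.1, hA.2, hk⟩
    · split at hr'
      · rw [hdumm, Finset.mem_image] at hr'
        obtain ⟨j, _, heq⟩ := hr'
        exact Or.inr ⟨j, heq.symm, by assumption⟩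
      · exact absurd hr' (Finset.notMem_empty _)
  have hvnot : ∀ (i : Fin N) (B : Finset (Fin d)), B ∈ M i → v ∉ B := by
    intro i B hB hvB
    have := h.mem_lt i B hB v hvB
    simp [hv] at this
  have hBnotmem : ∀ (i : Fin N) (B : Finset (Fin d)), v ∈ B → B ∉ M i :=
    fun i B hvB hB => hvnot i B hB hvB
  set M' : Fin N → Multiset (Finset (Fin d)) := fun i =>
    Sum.elim (fun Ak : Finset (Fin d) × ℕ => insert v Ak.1 ::ₘ (M i).erase Ak.1)
      (fun _ => M i) (f i) with hM'
  refine ⟨M', ?_, ?_, ?_, ?_, ?_, ?_⟩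
  · -- mem_lt
    intro i B hB x hx
    rcases PF i with ⟨A, k, heq, hAM, hAcard, hk⟩ | ⟨j, heq, hwi⟩
    · have hM'i : M' i = insert v A ::ₘ (M i).erase A := by simp [hM', heq]
      rw [hM'i] at hB
      rcases Multiset.mem_cons.mp hB with rfl | hBE
      · rcases Finset.mem_insert.mp hx with rfl | hxA
        · simp [hv]
        · have := h.mem_lt i A hAM x hxA; omega
      · have := h.mem_lt i B (Multiset.mem_of_mem_erase hBE) x hx; omega
    · have hM'i : M' i = M i := by simp [hM', heq]
      rw [hM'i] at hB
      have := h.mem_lt i B hB x hx; omega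
  · -- card_le
    intro i B hB
    rcases PF i with ⟨A, k, heq, hAM, hAcard, hk⟩ | ⟨j, heq, hwi⟩
    · have hM'i : M' i = insert v A ::ₘ (M i).erase A := by simp [hM', heq]
      rw [hM'i] at hB
      rcases Multiset.mem_cons.mp hB with rfl | hBE
      · calc (insert v A).card ≤ A.card + 1 := Finset.card_insert_le _ _
          _ ≤ r := by omega
      · exact h.card_le i B (Multiset.mem_of_mem_erase hBE)
    · have hM'i : M' i = M i := by simp [hM', heq]
      rw [hM'i] at hB
      exact h.card_le i B hB
  · -- disj
    intro i B hB C hC hne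
    rcases PF i with ⟨A, k, heq, hAM, hAcard, hk⟩ | ⟨j, heq, hwi⟩
    · have hM'i : M' i = insert v A ::ₘ (M i).erase A := by simp [hM', heq]
      rw [hM'i] at hB hC
      have haux : ∀ C' ∈ (M i).erase A, Disjoint (insert v A) C' := by
        intro C' hC'
        have hC'M : C' ∈ M i := Multiset.mem_of_mem_erase hC'
        rw [Finset.disjoint_left]
        intro z hz hzC
        rcases Finset.mem_insert.mp hz with rfl | hzA
        · exact hvnot i C' hC'M hzC
        · by_cases hAC : A = C'
          · subst hAC
            have hAne : A ≠ ∅ := Finset.nonempty_iff_ne_empty.mp ⟨z, hzA⟩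
            have h1 : (M i).count A ≤ 1 := h.mult i A hAne
            have h2 : 1 ≤ (M i).count A := Multiset.count_pos.mpr hAM
            have h3 : ((M i).erase A).count A = (M i).count A - 1 :=
              Multiset.count_erase_self _ _
            have h4 : A ∈ (M i).erase A := hC'
            have h5 : 1 ≤ ((M i).erase A).count A := Multiset.count_pos.mpr h4
            omega
          · exact (Finset.disjoint_left.mp (h.disj i A hAM C' hC'M hAC)) hzA hzC
      rcases Multiset.mem_cons.mp hB with rfl | hBE
      · rcases Multiset.mem_cons.mp hC with hCe | hCE
        · exact absurd hCe.symm hne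
        · exact haux C hCE
      · rcases Multiset.mem_cons.mp hC with rfl | hCE
        · exact (haux B hBE).symm
        · exact h.disj i B (Multiset.mem_of_mem_erase hBE) C (Multiset.mem_of_mem_erase hCE) hne
    · have hM'i : M' i = M i := by simp [hM', heq]
      rw [hM'i] at hB hC
      exact h.disj i B hB C hC hne
  · -- mult
    intro i B hBne
    rcases PF i with ⟨A, k, heq, hAM, hAcard, hk⟩ | ⟨j, heq, hwi⟩
    · have hM'i : M' i = insert v A ::ₘ (M i).erase A := by simp [hM', heq]
      rw [hM'i, Multiset.count_cons]
      have hE_le : ((M i).erase A).count B ≤ (M i).count B :=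
        Multiset.count_le_of_le B (Multiset.erase_le _ _)
      by_cases hBi : B = insert v A
      · have hBM : (M i).count B = 0 := by
          rw [Multiset.count_eq_zero]
          exact hBnotmem i B (hBi ▸ Finset.mem_insert_self v A)
        rw [if_pos hBi]
        omega
      · rw [if_neg hBi]
        have := h.mult i B hBne
        omega
    · have hM'i : M' i = M i := by simp [hM', heq]
      rw [hM'i]
      exact h.mult i B hBne
  · -- wsum
    intro i
    rcases PF i with ⟨A, k, heq, hAM, hAcard, hk⟩ | ⟨j, heq, hwi⟩
    · have hM'i : M' i = insert v A ::ₘ (M i).erase A := by simp [hM', heq]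
      rw [hM'i]
      have hvA : v ∉ A := hvnot i A hAM
      have hcons : A ::ₘ (M i).erase A = M i := Multiset.cons_erase hAM
      have hwi : (r - A.card) + (((M i).erase A).map (fun B => r - B.card)).sum = w i := by
        simp only [hw]
        conv_rhs => rw [← hcons]
        rw [Multiset.map_cons, Multiset.sum_cons]
      have hinsert : (insert v A).card = A.card + 1 := Finset.card_insert_of_notMem hvA
      rw [Multiset.map_cons, Multiset.sum_cons, hinsert]
      have := hwD i
      omega
    · have hM'i : M' i = M i := by simp [hM', heq]
      rw [hM'i]
      have h1 : w i ≤ D - 1 := by omega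
      have : w i = ((M i).map (fun B => r - B.card)).sum := by rw [hw]
      omega
  · -- total
    intro B hBcard hBmem
    by_cases hvB : v ∈ B
    · have hkey : ∀ i : Fin N, (M' i).count B = if f i ∈ units (B.erase v) then 1 else 0 := by
        intro i
        rcases PF i with ⟨A, k, heq, hAM, hAcard, hk⟩ | ⟨j, heq, hwi⟩
        · have hM'i : M' i = insert v A ::ₘ (M i).erase A := by simp [hM', heq]
          rw [hM'i, Multiset.count_cons]
          have hBM : (M i).count B = 0 := by
            rw [Multiset.count_eq_zero]; exact hBnotmem i B hvB
          have hE : ((M i).erase A).count B = 0 := by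
            have := Multiset.count_le_of_le B (Multiset.erase_le A (M i))
            omega
          rw [hE, Nat.zero_add]
          have hvA : v ∉ A := hvnot i A hAM
          by_cases hBA : B = insert v A
          · rw [if_pos hBA, if_pos]
            rw [mem_units]
            have hAB : A = B.erase v := by rw [hBA, Finset.erase_insert hvA]
            exact ⟨k, by rw [← hAB]; exact hk, by rw [heq, ← hAB]⟩
          · rw [if_neg hBA, if_neg]
            intro hmem
            rw [mem_units] at hmem
            obtain ⟨k', hk', heq'⟩ := hmem
            rw [heq] at heq'
            simp only [Sum.inl.injEq, Prod.mk.injEq] at heq'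
            apply hBA
            rw [heq'.1]
            exact (Finset.insert_erase hvB).symm
        · have hM'i : M' i = M i := by simp [hM', heq]
          rw [hM'i]
          have hBM : (M i).count B = 0 := by
            rw [Multiset.count_eq_zero]; exact hBnotmem i B hvB
          rw [hBM, if_neg]
          intro hmem
          rw [mem_units] at hmem
          obtain ⟨k', _, heq'⟩ := hmem
          rw [heq] at heq'
          exact Sum.inr_ne_inl heq'
      rw [Finset.sum_congr rfl (fun i _ => hkey i), ← Finset.card_filter, hcnt]
      have hBpos : 1 ≤ B.card := Finset.card_pos.mpr ⟨v, hvB⟩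
      have hgate : (B.erase v).card < r ∧ ∀ x ∈ B.erase v, (x : ℕ) < s := by
        constructor
        · rw [Finset.card_erase_of_mem hvB]; omega
        · intro x hx
          obtain ⟨hxv, hxB⟩ := Finset.mem_erase.mp hx
          have h1 := hBmem x hxB
          have h2 : (x : ℕ) ≠ s := by
            intro hxs
            exact hxv (Fin.ext (by simp [hv, hxs]))
          omega
      rw [ht]
      simp only [if_pos hgate]
      have e1 : (B.erase v).card = B.card - 1 := Finset.card_erase_of_mem hvB
      have e2 : d - (s + 1) = D - 1 := by omega
      have e3 : r - (B.card - 1) - 1 = r - B.card := by omega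
      rw [e1, e3, e2]
    · have hBs : ∀ x ∈ B, (x : ℕ) < s := by
        intro x hx
        have h1 := hBmem x hx
        have h2 : (x : ℕ) ≠ s := by
          intro hxs
          exact hvB (by rwa [show x = v from Fin.ext (by simp [hv, hxs])] at hx)
        omega
      have hkey : ∀ i : Fin N,
          (M' i).count B + (if f i ∈ units B then 1 else 0) = (M i).count B := by
        intro i
        rcases PF i with ⟨A, k, heq, hAM, hAcard, hk⟩ | ⟨j, heq, hwi⟩
        · have hM'i : M' i = insert v A ::ₘ (M i).erase A := by simp [hM', heq]
          rw [hM'i, Multiset.count_cons]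
          have hBA : B ≠ insert v A := by
            intro hBA
            exact hvB (hBA ▸ Finset.mem_insert_self v A)
          rw [if_neg hBA, Nat.add_zero]
          by_cases hAB : A = B
          · subst hAB
            have h1 : ((M i).erase A).count A = (M i).count A - 1 :=
              Multiset.count_erase_self _ _
            have h2 : 1 ≤ (M i).count A := Multiset.count_pos.mpr hAM
            have hfB : f i ∈ units A := by rw [mem_units]; exact ⟨k, hk, heq⟩
            rw [if_pos hfB]
            omega
          · rw [Multiset.count_erase_of_ne (fun hBA' => hAB hBA'.symm), if_neg]
            · omega
            · intro hmem
              rw [mem_units] at hmem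
              obtain ⟨k', _, heq'⟩ := hmem
              rw [heq] at heq'
              simp only [Sum.inl.injEq, Prod.mk.injEq] at heq'
              exact hAB heq'.1
        · have hM'i : M' i = M i := by simp [hM', heq]
          rw [hM'i, if_neg, Nat.add_zero]
          intro hmem
          rw [mem_units] at hmem
          obtain ⟨k', _, heq'⟩ := hmem
          rw [heq] at heq'
          exact Sum.inr_ne_inl heq'
      have hsum : ∑ i : Fin N, ((M' i).count B + (if f i ∈ units B then 1 else 0))
          = Nat.choose D (r - B.card) := by
        rw [Finset.sum_congr rfl (fun i _ => hkey i)]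
        exact h.total B hBcard hBs
      rw [Finset.sum_add_distrib, ← Finset.card_filter, hcnt] at hsum
      by_cases hBr : B.card < r
      · have hg : B.card < r ∧ ∀ x ∈ B, (x : ℕ) < s := ⟨hBr, hBs⟩
        have htB : t B = Nat.choose (D - 1) (r - B.card - 1) := by
          rw [ht]; simp only [if_pos hg]
        have hpascal : Nat.choose D (r - B.card)
            = Nat.choose (D - 1) (r - B.card - 1) + Nat.choose (D - 1) (r - B.card) := by
          have := Nat.choose_succ_succ' (D - 1) (r - B.card - 1)
          have e1 : D - 1 + 1 = D := by omega
          have e2 : r - B.card - 1 + 1 = r - B.card := by omega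
          rw [e1, e2] at this
          exact this
        have egoal : d - (s + 1) = D - 1 := by omega
        rw [egoal]
        omega
      · have hBr' : B.card = r := by omega
        have htB : t B = 0 := by
          rw [ht]; simp only [hBr']
          simp
        have e0 : r - B.card = 0 := by omega
        rw [e0] at hsum ⊢
        rw [Nat.choose_zero_right] at hsum ⊢
        omega

lemma list_map_getD_range {G : Type*} (L : List G) (z : G) :
    (List.range L.length).map (fun i => L.getD i z) = L := by
  apply List.ext_getElem
  · simp
  · intro i h1 h2
    simp only [List.getElem_map, List.getElem_range]
    exact List.getD_eq_getElem L z h2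

lemma multiset_map_getD_le {G : Type*} {β : Type*} (L : List G) (z : G)
    (F : Finset β) (p : β → ℕ) (hinj : ∀ a ∈ F, ∀ b ∈ F, p a = p b → a = b)
    (hlt : ∀ b ∈ F, p b < L.length) :
    F.val.map (fun b => L.getD (p b) z) ≤ (L : Multiset G) := by
  classical
  have hnd : (F.val.map p).Nodup := Multiset.Nodup.map_on (fun a ha b hb => hinj a ha b hb) F.nodup
  have hle : F.val.map p ≤ Multiset.range L.length := by
    rw [Multiset.le_iff_count]
    intro x
    by_cases hx : x ∈ F.val.map p
    · have h1 : (F.val.map p).count x ≤ 1 := Multiset.nodup_iff_count_le_one.mp hnd x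
      have h2 : x < L.length := by
        rw [Multiset.mem_map] at hx
        obtain ⟨b, hb, rfl⟩ := hx
        exact hlt b hb
      have h3 : (Multiset.range L.length).count x = 1 :=
        Multiset.count_eq_one_of_mem (Multiset.nodup_range _) (Multiset.mem_range.mpr h2)
      omega
    · rw [Multiset.count_eq_zero_of_notMem hx]
      exact Nat.zero_le _
  have hmap : (Multiset.range L.length).map (fun i => L.getD i z) = (L : Multiset G) := by
    rw [Multiset.range]
    rw [Multiset.map_coe]
    rw [list_map_getD_range]
  calc F.val.map (fun b => L.getD (p b) z)
      = (F.val.map p).map (fun i => L.getD i z) := by rw [Multiset.map_map]; rfl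
    _ ≤ (Multiset.range L.length).map (fun i => L.getD i z) := Multiset.map_le_map hle
    _ = (L : Multiset G) := hmap

lemma weak_baranyai (d r N : ℕ) (hN : Nat.choose d r ≤ N * (d / r)) :
    ∃ g : Finset (Fin d) → ℕ, (∀ e, e.card = r → g e < N) ∧
      ∀ e f : Finset (Fin d), e.card = r → f.card = r → e ≠ f → g e = g f → Disjoint e f := by
  classical
  have hMex : ∀ s : ℕ, s ≤ d → ∃ M, BInv d r N s M := by
    intro s
    induction s with
    | zero => exact fun _ => binv_base d r N hN
    | succ s ih =>
        intro hsd
        obtain ⟨M, hMi⟩ := ih (by omega)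
        exact binv_step d r N s (by omega) M hMi
  obtain ⟨M, hM⟩ := hMex d le_rfl
  have key : ∀ e : Finset (Fin d), e.card = r → ∃ i, e ∈ M i ∧ ∀ j, e ∈ M j → j = i := by
    intro e he
    have htot := hM.total e (le_of_eq he) (fun x _ => x.isLt)
    rw [Nat.sub_self, he, Nat.sub_self, Nat.choose_zero_right] at htot
    have h2 : ∃ i, 0 < (M i).count e := by
      by_contra hno
      push_neg at hno
      have hz : ∑ i : Fin N, (M i).count e = 0 :=
        Finset.sum_eq_zero (fun i _ => by have := hno i; omega)
      omega
    obtain ⟨i, hi⟩ := h2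
    refine ⟨i, Multiset.count_pos.mp hi, ?_⟩
    intro j hj
    by_contra hne
    have hpair : ∑ x ∈ ({j, i} : Finset (Fin N)), (M x).count e
        ≤ ∑ i : Fin N, (M i).count e :=
      Finset.sum_le_sum_of_subset (Finset.subset_univ _)
    rw [Finset.sum_pair hne] at hpair
    have hj1 : 0 < (M j).count e := Multiset.count_pos.mpr hj
    omega
  choose cls hcls huniq using key
  refine ⟨fun e => if h : e.card = r then (cls e h : ℕ) else 0, ?_, ?_⟩
  · intro e he
    simp only [dif_pos he]
    exact (cls e he).isLt
  · intro e f he hf hne hg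
    simp only [dif_pos he, dif_pos hf] at hg
    have hif : cls e he = cls f hf := Fin.ext hg
    exact hM.disj (cls f hf) e (hif ▸ hcls e he) f (hcls f hf) hne

/-- Lower bound `R(I_m^{(r)}, G) ≥ Ω(s_m(G)) - 1`: there is a `G`-coloring of the
`r`-subsets of an `(n-2)`-element set with no zero-sum intersecting family of size `m`. -/
theorem stmt_9 (G : Type*) [AddCommGroup G] [Fintype G] (r m s n : ℕ)
    (hr : 2 ≤ r) (hm : 0 < m) (hexp : AddMonoid.exponent G ∣ m)
    (hs : IsEGZConst G m s)
    (hn : IsLeast {n : ℕ | 0 < n ∧ s ≤ (n - 1).choose (r - 1)} n) :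
    ∃ c : Finset (Fin (n - 2)) → G, ¬ HasZeroSumIntersecting G r m (n - 2) c := by
  classical
  have hn1 : 0 < n := hn.1.1
  have hsle : s ≤ (n - 1).choose (r - 1) := hn.1.2
  have hspos : 0 < s := hs.1.1
  have hn2 : 2 ≤ n := by
    by_contra hlt
    have hne : n = 1 := by omega
    rw [hne] at hsle
    simp only [Nat.sub_self] at hsle
    rw [Nat.choose_eq_zero_of_lt (by omega : 0 < r - 1)] at hsle
    omega
  have hClt : (n - 2).choose (r - 1) < s := by
    by_contra hge
    push_neg at hge
    have hmem : 0 < n - 1 ∧ s ≤ (n - 1 - 1).choose (r - 1) := by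
      constructor
      · omega
      · have e : n - 1 - 1 = n - 2 := by omega
        rw [e]; exact hge
    have := hn.2 hmem
    omega
  by_cases hdr : n - 2 < r
  · refine ⟨fun _ => 0, ?_⟩
    rintro ⟨F, hFcard, hFr, -, -⟩
    have hFne : F.Nonempty := Finset.card_pos.mp (by omega)
    obtain ⟨e, he⟩ := hFne
    have h1 : e.card = r := hFr e he
    have h2 : e.card ≤ n - 2 := by
      calc e.card ≤ (Finset.univ : Finset (Fin (n - 2))).card :=
            Finset.card_le_card (Finset.subset_univ e)
        _ = n - 2 := by rw [Finset.card_univ, Fintype.card_fin]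
    omega
  · push_neg at hdr
    set d := n - 2 with hd
    set N := d.choose (r - 1) with hN
    have hrpos : 0 < r := by omega
    have hNbound : Nat.choose d r ≤ N * (d / r) := by
      have hid := Nat.choose_succ_right_eq d (r - 1)
      have e2 : r - 1 + 1 = r := by omega
      rw [e2] at hid
      have e3 : d - (r - 1) = d - r + 1 := by omega
      rw [e3] at hid
      have e4 : d - r + 1 ≤ r * (d / r) := by
        have h1 := Nat.div_add_mod d r
        have h2 := Nat.mod_lt d hrpos
        omega
      have e5 : Nat.choose d r * r ≤ (N * (d / r)) * r := by
        calc Nat.choose d r * r = N * (d - r + 1) := hid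
          _ ≤ N * (r * (d / r)) := Nat.mul_le_mul_left N e4
          _ = (N * (d / r)) * r := by ring
      exact Nat.le_of_mul_le_mul_right e5 hrpos
    obtain ⟨g, hglt, hgdisj⟩ := weak_baranyai d r N hNbound
    have hrN : r ≤ N := by
      have h2 := Nat.choose_symm (show r - 1 ≤ r by omega)
      have e1 : r - (r - 1) = 1 := by omega
      rw [e1, Nat.choose_one_right] at h2
      calc r = Nat.choose r (r - 1) := h2
        _ ≤ Nat.choose d (r - 1) := Nat.choose_le_choose (r - 1) hdr
    have hs2 : 2 ≤ s := by omega
    obtain ⟨S0, hS0card, hS0free⟩ :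
        ∃ S0 : Multiset G, Multiset.card S0 = s - 1 ∧
          ¬ ∃ T, T ≤ S0 ∧ Multiset.card T = m ∧ T.sum = 0 := by
      by_contra hno
      push_neg at hno
      have hmem : 0 < s - 1 ∧ ∀ S : Multiset G, Multiset.card S = s - 1 →
          ∃ T, T ≤ S ∧ Multiset.card T = m ∧ T.sum = 0 := by
        refine ⟨by omega, fun S hS => ?_⟩
        obtain ⟨T, h1, h2, h3⟩ := hno S hS
        exact ⟨T, h1, h2, h3⟩
      have := hs.2 hmem
      omega
    set L := S0.toList with hL
    have hLlen : L.length = s - 1 := by rw [hL, Multiset.length_toList]; exact hS0card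
    refine ⟨fun e => L.getD (g e) 0, ?_⟩
    rintro ⟨F, hFcard, hFr, hFint, hFsum⟩
    apply hS0free
    refine ⟨F.val.map (fun e => L.getD (g e) 0), ?_, ?_, ?_⟩
    · have hco : (L : Multiset G) = S0 := Multiset.coe_toList S0
      rw [← hco]
      apply multiset_map_getD_le
      · intro a ha b hb hpab
        by_contra hne
        have hdisj := hgdisj a b (hFr a ha) (hFr b hb) hne hpab
        have hint := hFint a ha b hb
        rw [Finset.disjoint_iff_inter_eq_empty] at hdisj
        rw [hdisj] at hint
        exact Finset.not_nonempty_empty hint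
      · intro b hb
        have := hglt b (hFr b hb)
        omega
    · rw [Multiset.card_map]
      exact hFcard
    · have hms : (F.val.map (fun e => L.getD (g e) 0)).sum = ∑ e ∈ F, L.getD (g e) 0 :=
        (Finset.sum_eq_multiset_sum F _).symm
      rw [hms]
      exact hFsum
end

section
/- Let G be a finite abelian group, let r ≥ 2, and let m be a positive multiple of exp(G). Let n = Ω(s_m(G)) be the least positive integer with C(n-1, r-1) ≥ s_m(G). If r divides n - 1, then R(I_m^{(r)}, G) = R(S_m^{(r)}, G) = n. -/
open Finset

namespace ZSRB

def firstM (N M : ℕ) : Finset (Fin N) := univ.filter (fun x => (x : ℕ) < M)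

def cA (N r M : ℕ) (A : Finset (Fin N)) : ℕ :=
  if A.card ≤ r then (N - M).choose (r - A.card) else 0

def dA (N r M : ℕ) (A : Finset (Fin N)) : ℕ :=
  if A.card < r then (N - M - 1).choose (r - 1 - A.card) else 0

def Good (N r k M : ℕ) (P : Fin ((N-1).choose (r-1)) → Multiset (Finset (Fin N))) : Prop :=
  (∀ i, Multiset.card (P i) = k) ∧
  (∀ i, ∀ A ∈ P i, ∀ x ∈ A, (x : ℕ) < M) ∧
  (∀ i, ((P i).map Finset.card).sum = M) ∧
  (∀ i, ∀ y : Fin N, ((P i).map (fun A => if y ∈ A then 1 else 0)).sum ≤ 1) ∧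
  (∀ B : Finset (Fin N), (∀ x ∈ B, (x : ℕ) < M) → (∑ i, (P i).count B) = cA N r M B)

lemma ratio_key {N r M : ℕ} (hM : M < N) (A : Finset (Fin N)) (hle : A.card ≤ r) :
    (r - A.card) * cA N r M A = (N - M) * dA N r M A := by
  unfold cA dA
  rcases eq_or_lt_of_le hle with h | h
  · simp [h, if_neg (lt_irrefl r)]
  · rw [if_pos hle, if_pos h]
    set u := N - M - 1 with hu
    set w := r - 1 - A.card with hw
    have h1 : N - M = u + 1 := by omega
    have h2 : r - A.card = w + 1 := by omega
    have key := Nat.add_one_mul_choose_eq u w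
    rw [h1, h2, key]
    ring

lemma card_firstM {N M : ℕ} (h : M ≤ N) : (firstM N M).card = M := by
  have : firstM N M = (Finset.range M).attachFin
      (fun m hm => lt_of_lt_of_le (Finset.mem_range.mp hm) h) := by
    ext x
    simp [firstM, Finset.mem_attachFin]
  rw [this, Finset.card_attachFin, Finset.card_range]

lemma exists_selection {N r k M : ℕ} (hr : 0 < r) (hN : N = r * k) (hM : M < N)
    (P : Fin ((N-1).choose (r-1)) → Multiset (Finset (Fin N))) (hg : Good N r k M P) :
    ∃ σ : Fin ((N-1).choose (r-1)) → Finset (Fin N), (∀ i, σ i ∈ P i) ∧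
      ∀ B : Finset (Fin N), (∀ x ∈ B, (x : ℕ) < M) →
        (univ.filter (fun i => σ i = B)).card = dA N r M B := by
  classical
  obtain ⟨hcard, hsub, hsumcard, hdisj, hcount⟩ := hg
  have hparts : ∀ i, ∀ A ∈ P i, (∀ x ∈ A, (x:ℕ) < M) ∧ 0 < cA N r M A ∧ A.card ≤ r := by
    intro i A hA
    have h1 : (P i).count A ≤ ∑ j, (P j).count A :=
      Finset.single_le_sum (f := fun j => (P j).count A) (fun j _ => Nat.zero_le _) (mem_univ i)
    have h2 := Multiset.count_pos.mpr hA
    have hpos : 0 < cA N r M A := by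
      rw [hcount A (hsub i A hA)] at h1; omega
    refine ⟨hsub i A hA, hpos, ?_⟩
    by_contra hgt
    have h0 : cA N r M A = 0 := by unfold cA; rw [if_neg (by omega)]
    omega
  have hNM : ((N : ℚ) - M) ≠ 0 := by
    have : (M:ℚ) < N := by exact_mod_cast hM
    linarith
  have hratio : ∀ i, ((P i).map (fun A => (dA N r M A : ℚ) / (cA N r M A))).sum = 1 := by
    intro i
    have hmapeq : ((P i).map (fun A => (dA N r M A : ℚ) / (cA N r M A)))
        = (P i).map (fun A => ((r : ℚ) - A.card) * ((N : ℚ) - M)⁻¹) := by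
      apply Multiset.map_congr rfl
      intro A hA
      obtain ⟨_, hApos, hAr⟩ := hparts i A hA
      have hcne : ((cA N r M A : ℚ)) ≠ 0 := by exact_mod_cast hApos.ne'
      have key : ((r - A.card : ℕ) : ℚ) * (cA N r M A : ℚ)
          = ((N - M : ℕ) : ℚ) * (dA N r M A : ℚ) := by exact_mod_cast ratio_key hM A hAr
      rw [Nat.cast_sub hAr, Nat.cast_sub hM.le] at key
      have hcard : (A.card : ℚ) ≤ r := by exact_mod_cast hAr
      field_simp
      linear_combination -key
    rw [hmapeq, Multiset.sum_map_mul_right]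
    have hsum2 : ((P i).map (fun A => (r:ℚ) - (A.card : ℚ))).sum = (N : ℚ) - M := by
      rw [Multiset.sum_map_sub]
      have hc : ((P i).map (fun _ => (r:ℚ))).sum = (k : ℚ) * r := by
        rw [Multiset.map_const', Multiset.sum_replicate, hcard i]
        simp [nsmul_eq_mul]
      have hd : ((P i).map (fun A => (A.card : ℚ))).sum = (M : ℚ) := by
        have : ((P i).map (fun A => (A.card : ℚ))) = ((P i).map Finset.card).map (fun x : ℕ => (x:ℚ)) := by
          rw [Multiset.map_map]; rfl
        rw [this, ← Nat.cast_multiset_sum, hsumcard i]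
      rw [hc, hd]
      have : (N : ℚ) = (k : ℚ) * r := by
        rw [hN]; push_cast; ring
      rw [this]
    rw [hsum2, mul_inv_cancel₀ hNM]
  -- the bipartite "options" sets and Hall's condition
  let O : Fin ((N-1).choose (r-1)) → Finset (Finset (Fin N) × ℕ) :=
    fun i => (P i).toFinset.biUnion (fun A => (range (dA N r M A)).image (fun j => (A, j)))
  have hall : ∀ W : Finset (Fin ((N-1).choose (r-1))), W.card ≤ (W.biUnion O).card := by
    intro W
    set U := W.biUnion (fun i => (P i).toFinset) with hU
    have hUp : ∀ A ∈ U, (∀ x ∈ A, (x:ℕ) < M) ∧ 0 < cA N r M A ∧ A.card ≤ r := by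
      intro A hA
      obtain ⟨i, _, hAi⟩ := Finset.mem_biUnion.mp hA
      exact hparts i A (Multiset.mem_toFinset.mp hAi)
    have hbu : W.biUnion O = U.biUnion (fun A => (range (dA N r M A)).image (fun j => (A, j))) := by
      rw [hU, ← Finset.biUnion_biUnion]
    have hcardU : (W.biUnion O).card = ∑ A ∈ U, dA N r M A := by
      rw [hbu, Finset.card_biUnion]
      · refine Finset.sum_congr rfl (fun A _ => ?_)
        rw [Finset.card_image_of_injective _ (fun a b h => by simpa using h), Finset.card_range]
      · intro A hA B hB hAB
        simp only [Finset.disjoint_left, Finset.mem_image, Finset.mem_range]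
        rintro ⟨x, j⟩ ⟨j1, _, h1⟩ ⟨j2, _, h2⟩
        injection h1 with e1 _
        injection h2 with e2 _
        exact hAB (e1.trans e2.symm)
    have hQ : (W.card : ℚ) ≤ ∑ A ∈ U, (dA N r M A : ℚ) := by
      have h1 : (W.card : ℚ) = ∑ i ∈ W, ((P i).map (fun A => (dA N r M A : ℚ) / (cA N r M A))).sum := by
        rw [Finset.sum_congr rfl (fun i _ => hratio i)]; simp
      rw [h1]
      have h2 : ∀ i ∈ W, ((P i).map (fun A => (dA N r M A : ℚ) / (cA N r M A))).sum
          = ∑ A ∈ U, ((P i).count A : ℚ) * ((dA N r M A : ℚ) / (cA N r M A)) := by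
        intro i hi
        rw [Finset.sum_multiset_map_count]
        rw [Finset.sum_subset (Finset.subset_biUnion_of_mem (fun j => (P j).toFinset) hi)]
        · exact Finset.sum_congr rfl (fun A _ => by rw [nsmul_eq_mul])
        · intro A _ hA
          rw [Multiset.count_eq_zero_of_notMem (by simpa [Multiset.mem_toFinset] using hA)]
          simp
      rw [Finset.sum_congr rfl h2, Finset.sum_comm]
      apply Finset.sum_le_sum
      intro A hA
      obtain ⟨hAsub, hApos, hAr⟩ := hUp A hA
      have hcne : ((cA N r M A : ℚ)) ≠ 0 := by exact_mod_cast hApos.ne'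
      have hfrac0 : 0 ≤ (dA N r M A : ℚ) / cA N r M A := by positivity
      have hsumc : (∑ i ∈ W, ((P i).count A : ℚ)) ≤ (cA N r M A : ℚ) := by
        have h3 : ∑ i ∈ W, (P i).count A ≤ ∑ i, (P i).count A :=
          Finset.sum_le_sum_of_subset (subset_univ W)
        rw [hcount A hAsub] at h3
        exact_mod_cast Nat.cast_le.mpr h3
      calc ∑ i ∈ W, ((P i).count A : ℚ) * ((dA N r M A : ℚ) / (cA N r M A))
          = (∑ i ∈ W, ((P i).count A : ℚ)) * ((dA N r M A : ℚ) / (cA N r M A)) := by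
            rw [Finset.sum_mul]
        _ ≤ (cA N r M A : ℚ) * ((dA N r M A : ℚ) / (cA N r M A)) :=
            mul_le_mul_of_nonneg_right hsumc hfrac0
        _ = (dA N r M A : ℚ) := by field_simp
    rw [hcardU]
    exact_mod_cast hQ
  obtain ⟨f, hfinj, hfmem⟩ := (Finset.all_card_le_biUnion_card_iff_exists_injective O).mp hall
  have hdecode : ∀ i, (f i).1 ∈ P i ∧ (f i).2 < dA N r M (f i).1 := by
    intro i
    have hm := hfmem i
    simp only [O, Finset.mem_biUnion, Finset.mem_image, Finset.mem_range] at hm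
    obtain ⟨A, hA, j, hj, hEq⟩ := hm
    rw [← hEq]
    exact ⟨Multiset.mem_toFinset.mp hA, hj⟩
  refine ⟨fun i => (f i).1, fun i => (hdecode i).1, ?_⟩
  have hle : ∀ B, (univ.filter (fun i => (f i).1 = B)).card ≤ dA N r M B := by
    intro B
    have hinj : Set.InjOn (fun i => (f i).2) (univ.filter (fun i => (f i).1 = B)) := by
      intro i hi j hj hij
      simp only [coe_filter, Set.mem_setOf_eq] at hi hj
      exact hfinj (Prod.ext (hi.2.trans hj.2.symm) hij)
    have himg : (univ.filter (fun i => (f i).1 = B)).image (fun i => (f i).2) ⊆ range (dA N r M B) := by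
      intro j hj
      obtain ⟨i, hi, hij⟩ := Finset.mem_image.mp hj
      simp only [mem_filter] at hi
      rw [Finset.mem_range, ← hij, ← hi.2]
      exact (hdecode i).2
    calc (univ.filter (fun i => (f i).1 = B)).card
        = ((univ.filter (fun i => (f i).1 = B)).image (fun i => (f i).2)).card :=
          (Finset.card_image_of_injOn hinj).symm
      _ ≤ (range (dA N r M B)).card := Finset.card_le_card himg
      _ = dA N r M B := Finset.card_range _
  have hfibs : ∑ B ∈ (firstM N M).powerset, (univ.filter (fun i => (f i).1 = B)).card
      = (N-1).choose (r-1) := by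
    have hmaps : ∀ i : Fin ((N-1).choose (r-1)), i ∈ univ → (f i).1 ∈ (firstM N M).powerset := by
      intro i _
      rw [Finset.mem_powerset]
      intro x hx
      simp only [firstM, mem_filter]
      exact ⟨mem_univ x, ((hparts i _ (hdecode i).1).1) x hx⟩
    have hfw := Finset.card_eq_sum_card_fiberwise hmaps
    rw [Finset.card_univ, Fintype.card_fin] at hfw
    exact hfw.symm
  have hdsum : ∑ B ∈ (firstM N M).powerset, dA N r M B = (N-1).choose (r-1) := by
    have hpa := Finset.sum_powerset_apply_card
      (f := fun a => if a < r then (N - M - 1).choose (r - 1 - a) else 0) (x := firstM N M)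
    rw [card_firstM hM.le] at hpa
    have hdepcard : ∀ B : Finset (Fin N), dA N r M B
        = if B.card < r then (N - M - 1).choose (r - 1 - B.card) else 0 := fun B => rfl
    rw [Finset.sum_congr rfl (fun B _ => hdepcard B), hpa]
    -- now a pure binomial identity
    have hvdm := Nat.add_choose_eq M (N - M - 1) (r - 1)
    rw [Finset.Nat.sum_antidiagonal_eq_sum_range_succ_mk] at hvdm
    have hNm1 : M + (N - M - 1) = N - 1 := by omega
    have hr1 : r - 1 + 1 = r := by omega
    simp only [Nat.succ_eq_add_one, hr1, hNm1] at hvdm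
    simp only [smul_eq_mul]
    rw [hvdm]
    have h1 : ∑ a ∈ range (M + 1), (M.choose a * if a < r then (N - M - 1).choose (r - 1 - a) else 0)
        = ∑ a ∈ range (M + r + 1), (M.choose a * if a < r then (N - M - 1).choose (r - 1 - a) else 0) :=
      Finset.sum_subset (Finset.range_subset_range.mpr (by omega)) (fun a _ ha => by
        have h : M < a := by simpa using ha
        rw [Nat.choose_eq_zero_of_lt h, zero_mul])
    have h2 : ∑ a ∈ range r, M.choose a * (N - M - 1).choose (r - 1 - a)
        = ∑ a ∈ range (M + r + 1), (M.choose a * if a < r then (N - M - 1).choose (r - 1 - a) else 0) := by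
      have hcg : ∀ a ∈ range r, M.choose a * (N - M - 1).choose (r - 1 - a)
          = M.choose a * if a < r then (N - M - 1).choose (r - 1 - a) else 0 := fun a ha => by
        rw [if_pos (Finset.mem_range.mp ha)]
      rw [Finset.sum_congr rfl hcg]
      exact Finset.sum_subset (Finset.range_subset_range.mpr (by omega)) (fun a _ ha => by
        have h : ¬ a < r := by simpa using ha
        rw [if_neg h, mul_zero])
    rw [h1, h2]
  intro B hB
  have hBmem : B ∈ (firstM N M).powerset := by
    rw [Finset.mem_powerset]
    intro x hx
    simp only [firstM, mem_filter]
    exact ⟨mem_univ x, hB x hx⟩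
  exact (Finset.sum_eq_sum_iff_of_le (fun B _ => hle B)).mp (hfibs.trans hdsum.symm) B hBmem

lemma cA_pascal {N r M : ℕ} (hM : M < N) (A : Finset (Fin N)) :
    cA N r M A = cA N r (M + 1) A + dA N r M A := by
  unfold cA dA
  rcases lt_trichotomy A.card r with h | h | h
  · rw [if_pos h.le, if_pos h.le, if_pos h]
    have h3 : N - (M+1) = N - M - 1 := by omega
    rw [h3]
    set u := N - M - 1 with hu
    set w := r - 1 - A.card with hw
    have h1 : N - M = u + 1 := by omega
    have h2 : r - A.card = w + 1 := by omega
    rw [h1, h2, Nat.choose_succ_succ, Nat.add_comm]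
  · rw [if_pos h.le, if_pos h.le, if_neg (by omega)]
    have h2 : r - A.card = 0 := by omega
    simp [h2]
  · rw [if_neg (by omega), if_neg (by omega), if_neg (by omega)]

lemma good_step {N r k M : ℕ} (hr : 0 < r) (hN : N = r * k) (hM : M < N)
    (P : Fin ((N-1).choose (r-1)) → Multiset (Finset (Fin N))) (hg : Good N r k M P) :
    ∃ P' : Fin ((N-1).choose (r-1)) → Multiset (Finset (Fin N)), Good N r k (M+1) P' := by
  classical
  obtain ⟨σ, hσmem, hσcount⟩ := exists_selection hr hN hM P hg
  obtain ⟨hcard, hsub, hsumcard, hdisj, hcount⟩ := hg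
  set x : Fin N := ⟨M, hM⟩ with hx
  have hxval : (x : ℕ) = M := rfl
  have hxnot : ∀ i, x ∉ σ i := by
    intro i hmem
    have := hsub i (σ i) (hσmem i) x hmem
    omega
  refine ⟨fun i => (insert x (σ i)) ::ₘ ((P i).erase (σ i)), ?_, ?_, ?_, ?_, ?_⟩
  · -- cardinality
    intro i
    have hP : P i = σ i ::ₘ (P i).erase (σ i) := (Multiset.cons_erase (hσmem i)).symm
    have h1 := hcard i
    rw [hP, Multiset.card_cons] at h1
    rw [Multiset.card_cons]
    omega
  · -- parts within first M+1
    intro i A hA y hy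
    rcases Multiset.mem_cons.mp hA with h | h
    · subst h
      rcases Finset.mem_insert.mp hy with h | h
      · subst h; omega
      · have := hsub i (σ i) (hσmem i) y h; omega
    · have := hsub i A (Multiset.mem_of_mem_erase h) y hy; omega
  · -- sum of cards
    intro i
    have hP : P i = σ i ::ₘ (P i).erase (σ i) := (Multiset.cons_erase (hσmem i)).symm
    have h1 := hsumcard i
    rw [hP, Multiset.map_cons, Multiset.sum_cons] at h1
    rw [Multiset.map_cons, Multiset.sum_cons, Finset.card_insert_of_notMem (hxnot i)]
    omega
  · -- disjointness indicator
    intro i y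
    have hP : P i = σ i ::ₘ (P i).erase (σ i) := (Multiset.cons_erase (hσmem i)).symm
    have h1 := hdisj i y
    rw [hP, Multiset.map_cons, Multiset.sum_cons] at h1
    rw [Multiset.map_cons, Multiset.sum_cons]
    by_cases hyx : y = x
    · rw [hyx, if_pos (Finset.mem_insert_self _ _)]
      have hz : ((P i).erase (σ i)).map (fun A => if x ∈ A then (1:ℕ) else 0)
          = Multiset.replicate (Multiset.card ((P i).erase (σ i))) 0 := by
        rw [Multiset.eq_replicate]
        constructor
        · rw [Multiset.card_map]
        · intro b hb
          obtain ⟨A, hA, hbA⟩ := Multiset.mem_map.mp hb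
          have hyA : x ∉ A := by
            intro hmem
            have := hsub i A (Multiset.mem_of_mem_erase hA) x hmem
            omega
          rw [← hbA, if_neg hyA]
      rw [hz, Multiset.sum_replicate, smul_zero]
      omega
    · have : (if y ∈ insert x (σ i) then (1:ℕ) else 0) = if y ∈ σ i then 1 else 0 := by
        by_cases h : y ∈ σ i
        · rw [if_pos h, if_pos (Finset.mem_insert_of_mem h)]
        · rw [if_neg h, if_neg (fun hc => (by rcases Finset.mem_insert.mp hc with h' | h' <;> [exact hyx h'; exact h h']))]
      rw [this]
      exact h1
  · -- the count invariant
    intro B hB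
    show ∑ i, Multiset.count B ((insert x (σ i)) ::ₘ ((P i).erase (σ i))) = cA N r (M+1) B
    by_cases hxB : x ∈ B
    · -- new sets
      have hB' : ∀ y ∈ B.erase x, (y : ℕ) < M := by
        intro y hy
        have h1 := Finset.mem_of_mem_erase hy
        have h2 := Finset.ne_of_mem_erase hy
        have h3 := hB y h1
        have : (y : ℕ) ≠ M := fun hc => h2 (Fin.ext hc)
        omega
      have hterm : ∀ i, ((insert x (σ i)) ::ₘ ((P i).erase (σ i))).count B
          = if σ i = B.erase x then 1 else 0 := by
        intro i
        have hBnotin : B ∉ P i := by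
          intro hc
          have := hsub i B hc x hxB
          omega
        have h0 : ((P i).erase (σ i)).count B = 0 := by
          rw [Multiset.count_eq_zero]
          intro hc
          exact hBnotin (Multiset.mem_of_mem_erase hc)
        rw [Multiset.count_cons, h0]
        by_cases h : σ i = B.erase x
        · rw [if_pos h, if_pos]
          rw [h, Finset.insert_erase hxB]
        · rw [if_neg h, if_neg]
          intro hc
          apply h
          rw [hc]
          exact (Finset.erase_insert (hxnot i)).symm
      have hsum : ∑ i, ((insert x (σ i)) ::ₘ ((P i).erase (σ i))).count B
          = (univ.filter (fun i => σ i = B.erase x)).card := by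
        rw [Finset.sum_congr rfl (fun i _ => hterm i)]
        exact (Finset.card_filter _ _).symm
      rw [hsum, hσcount _ hB']
      -- dA of the erased set equals cA at M+1 of B
      unfold cA dA
      have hcB : B.card = (B.erase x).card + 1 := by
        rw [Finset.card_erase_of_mem hxB]
        have : 0 < B.card := Finset.card_pos.mpr ⟨x, hxB⟩
        omega
      by_cases h : (B.erase x).card < r
      · rw [if_pos h, if_pos (by omega)]
        have e1 : N - M - 1 = N - (M+1) := by omega
        have e2 : r - 1 - (B.erase x).card = r - B.card := by omega
        rw [e1, e2]
      · rw [if_neg h, if_neg (by omega)]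
    · -- old sets
      have hBsub : ∀ y ∈ B, (y : ℕ) < M := by
        intro y hy
        have h3 := hB y hy
        have : (y : ℕ) ≠ M := fun hc => hxB (by rwa [show y = x from Fin.ext hc] at hy)
        omega
      have hterm : ∀ i, ((insert x (σ i)) ::ₘ ((P i).erase (σ i))).count B
          + (if σ i = B then 1 else 0) = (P i).count B := by
        intro i
        have hne : B ≠ insert x (σ i) := by
          intro hc
          have : (x : ℕ) < M := hBsub x (by rw [hc]; exact Finset.mem_insert_self _ _)
          omega
        rw [Multiset.count_cons, if_neg hne, add_zero]
        by_cases h : σ i = B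
        · rw [if_pos h, ← h, Multiset.count_erase_self]
          have : 0 < (P i).count (σ i) := Multiset.count_pos.mpr (hσmem i)
          omega
        · rw [if_neg h, Multiset.count_erase_of_ne (fun hc => h hc.symm), add_zero]
      have hsum : ∑ i, (((insert x (σ i)) ::ₘ ((P i).erase (σ i))).count B
          + (if σ i = B then 1 else 0)) = cA N r M B := by
        rw [Finset.sum_congr rfl (fun i _ => hterm i), hcount B hBsub]
      rw [Finset.sum_add_distrib] at hsum
      have hfil : ∑ i, (if σ i = B then 1 else 0) = (univ.filter (fun i => σ i = B)).card :=
        (Finset.card_filter _ _).symm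
      rw [hfil, hσcount B hBsub] at hsum
      have hpas := cA_pascal (r := r) hM B
      omega

lemma good_zero {N r k : ℕ} (hr : 0 < r) (hN : N = r * k) :
    Good N r k 0 (fun _ => Multiset.replicate k (∅ : Finset (Fin N))) := by
  refine ⟨?_, ?_, ?_, ?_, ?_⟩
  · intro i; rw [Multiset.card_replicate]
  · intro i A hA x hx
    rw [Multiset.eq_of_mem_replicate hA] at hx
    exact absurd hx (Finset.notMem_empty x)
  · intro i
    rw [Multiset.map_replicate, Finset.card_empty, Multiset.sum_replicate, smul_zero]
  · intro i y
    rw [Multiset.map_replicate, if_neg (Finset.notMem_empty y), Multiset.sum_replicate, smul_zero]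
    exact Nat.zero_le _
  · intro B hB
    have hBempty : B = ∅ := by
      rcases Finset.eq_empty_or_nonempty B with h | ⟨y, hy⟩
      · exact h
      · exact absurd (hB y hy) (by omega)
    subst hBempty
    have hone : ∀ i : Fin ((N-1).choose (r-1)), (Multiset.replicate k (∅ : Finset (Fin N))).count ∅ = k :=
      fun i => Multiset.count_replicate_self _ _
    rw [Finset.sum_congr rfl (fun i _ => hone i), Finset.sum_const, Finset.card_univ,
      Fintype.card_fin, smul_eq_mul]
    unfold cA
    simp only [Finset.card_empty, Nat.sub_zero]
    simp only [Nat.zero_le, ↓reduceIte]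
    rcases Nat.eq_zero_or_pos k with hk | hk
    · subst hk
      rw [mul_zero] at hN
      subst hN
      simp [Nat.choose_eq_zero_of_lt hr]
    · have hNpos : 0 < N := by rw [hN]; positivity
      have key := Nat.add_one_mul_choose_eq (N-1) (r-1)
      have e1 : N - 1 + 1 = N := by omega
      have e2 : r - 1 + 1 = r := by omega
      rw [e1, e2] at key
      have hmain : r * ((N-1).choose (r-1) * k) = r * N.choose r := by
        calc r * ((N-1).choose (r-1) * k) = (r * k) * (N-1).choose (r-1) := by ring
        _ = N * (N-1).choose (r-1) := by rw [← hN]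
        _ = N.choose r * r := key
        _ = r * N.choose r := by ring
      exact Nat.eq_of_mul_eq_mul_left hr hmain

lemma exists_good {N r k : ℕ} (hr : 0 < r) (hN : N = r * k) :
    ∀ M, M ≤ N → ∃ P, Good N r k M P := by
  intro M
  induction M with
  | zero => exact fun _ => ⟨_, good_zero hr hN⟩
  | succ M ih =>
      intro hM
      obtain ⟨P, hP⟩ := ih (by omega)
      exact good_step hr hN (by omega) P hP

theorem baranyai {N r : ℕ} (hr : 0 < r) (hN : 0 < N) (hdvd : r ∣ N) :
    ∃ φ : Finset (Fin N) → Fin ((N-1).choose (r-1)),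
      ∀ e f : Finset (Fin N), e.card = r → f.card = r → e ≠ f → φ e = φ f → e ∩ f = ∅ := by
  classical
  obtain ⟨k, hk⟩ := hdvd
  obtain ⟨P, hP⟩ := exists_good hr hk N le_rfl
  obtain ⟨hcard, hsub, hsumcard, hdisj, hcount⟩ := hP
  have hrN : r ≤ N := Nat.le_of_dvd hN ⟨k, hk⟩
  have htpos : 0 < (N-1).choose (r-1) := Nat.choose_pos (by omega)
  have hex : ∀ e : Finset (Fin N), e.card = r → ∃ i, e ∈ P i := by
    intro e he
    have h1 : ∑ i, (P i).count e = 1 := by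
      rw [hcount e (fun x _ => x.isLt)]
      unfold cA
      rw [he, if_pos le_rfl, Nat.sub_self, Nat.sub_self, Nat.choose_zero_right]
    by_contra hc
    push_neg at hc
    have hz : ∀ i, (P i).count e = 0 := fun i => Multiset.count_eq_zero.mpr (hc i)
    rw [Finset.sum_congr rfl (fun i _ => hz i)] at h1
    simp at h1
  refine ⟨fun e => if h : ∃ i, e ∈ P i then h.choose else ⟨0, htpos⟩, ?_⟩
  intro e f he hf hef hφ
  have hee := hex e he
  have hff := hex f hf
  beta_reduce at hφ
  rw [dif_pos hee, dif_pos hff] at hφ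
  set i := hee.choose with hi
  have hmem_e : e ∈ P i := hee.choose_spec
  have hmem_f : f ∈ P i := by rw [hφ]; exact hff.choose_spec
  by_contra hne
  obtain ⟨y, hy⟩ := Finset.nonempty_iff_ne_empty.mpr hne
  rw [Finset.mem_inter] at hy
  have hpair : ({e, f} : Multiset (Finset (Fin N))) ≤ P i := by
    rw [Multiset.le_iff_count]
    intro a
    have h1 : 1 ≤ (P i).count e := Multiset.one_le_count_iff_mem.mpr hmem_e
    have h2 : 1 ≤ (P i).count f := Multiset.one_le_count_iff_mem.mpr hmem_f
    have hcc : ({e, f} : Multiset (Finset (Fin N))).count a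
        = (if a = f then 1 else 0) + (if a = e then 1 else 0) := by
      show (e ::ₘ f ::ₘ 0).count a = _
      rw [Multiset.count_cons, Multiset.count_cons, Multiset.count_zero, zero_add]
    rw [hcc]
    by_cases hae : a = e <;> by_cases haf : a = f
    · exact absurd (hae.symm.trans haf) hef
    · subst hae
      rw [if_pos rfl, if_neg haf]
      omega
    · subst haf
      rw [if_neg hae, if_pos rfl]
      omega
    · rw [if_neg hae, if_neg haf]
      exact Nat.zero_le _
  have hle2 := Multiset.map_le_map (f := fun A => if y ∈ A then (1:ℕ) else 0) hpair
  obtain ⟨u, hu⟩ := Multiset.le_iff_exists_add.mp hle2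
  have hsum2 : (({e, f} : Multiset (Finset (Fin N))).map (fun A => if y ∈ A then (1:ℕ) else 0)).sum = 2 := by
    show ((e ::ₘ f ::ₘ 0).map (fun A => if y ∈ A then (1:ℕ) else 0)).sum = 2
    rw [Multiset.map_cons, Multiset.map_cons, Multiset.map_zero, Multiset.sum_cons,
      Multiset.sum_cons, Multiset.sum_zero, if_pos hy.1, if_pos hy.2]
    omega
  have hd := hdisj i y
  rw [hu, Multiset.sum_add, hsum2] at hd
  omega

end ZSRB

-- ===== main glue =====

lemma exists_le_map {α β : Type*} (f : α → β) (S : Multiset α) :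
    ∀ T : Multiset β, T ≤ S.map f → ∃ U, U ≤ S ∧ U.map f = T := by
  classical
  induction S using Multiset.induction_on with
  | empty =>
      intro T hT
      rw [Multiset.map_zero] at hT
      exact ⟨0, le_rfl, by simpa using (Multiset.le_zero.mp hT).symm⟩
  | cons a s ih =>
      intro T hT
      rw [Multiset.map_cons] at hT
      by_cases hfa : f a ∈ T
      · have h1 : T.erase (f a) ≤ s.map f := by
          have h2 := Multiset.erase_le_erase (f a) hT
          rwa [Multiset.erase_cons_head] at h2
        obtain ⟨U, hU, hUm⟩ := ih _ h1
        refine ⟨a ::ₘ U, Multiset.cons_le_cons a hU, ?_⟩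
        rw [Multiset.map_cons, hUm, Multiset.cons_erase hfa]
      · have h1 : T ≤ s.map f := by
          rw [Multiset.le_iff_count] at hT ⊢
          intro b
          have h3 := hT b
          rw [Multiset.count_cons] at h3
          by_cases hb : b = f a
          · subst hb
            have h4 := Multiset.count_eq_zero.mpr hfa
            omega
          · simpa [hb] using h3
        obtain ⟨U, hU, hUm⟩ := ih _ h1
        exact ⟨U, le_trans hU (Multiset.le_cons_self s a), hUm⟩



namespace ZSRB

lemma star_to_int {G : Type*} [AddCommGroup G] {r m d : ℕ} {c : Finset (Fin d) → G}
    (h : HasZeroSumStar G r m d c) : HasZeroSumIntersecting G r m d c := by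
  obtain ⟨v, F, hFc, hFm, hFs⟩ := h
  exact ⟨F, hFc, fun e he => (hFm e he).1,
    fun e he f hf => ⟨v, Finset.mem_inter.mpr ⟨(hFm e he).2, (hFm f hf).2⟩⟩, hFs⟩

lemma upper {G : Type*} [AddCommGroup G] {r m s n : ℕ} (hr : 2 ≤ r) (hs : IsEGZConst G m s)
    (hn0 : 0 < n) (hns : s ≤ (n-1).choose (r-1)) (c : Finset (Fin n) → G) :
    HasZeroSumStar G r m n c := by
  classical
  set v : Fin n := ⟨0, hn0⟩ with hv
  set E0 : Finset (Finset (Fin n)) := ((univ.erase v).powersetCard (r-1)).image (insert v) with hE0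
  have hE0mem : ∀ e ∈ E0, e.card = r ∧ v ∈ e := by
    intro e he
    obtain ⟨A, hA, rfl⟩ := Finset.mem_image.mp he
    obtain ⟨hAsub, hAcard⟩ := Finset.mem_powersetCard.mp hA
    have hvA : v ∉ A := fun h => (Finset.mem_erase.mp (hAsub h)).1 rfl
    exact ⟨by rw [Finset.card_insert_of_notMem hvA, hAcard]; omega, Finset.mem_insert_self _ _⟩
  have hE0card : E0.card = (n-1).choose (r-1) := by
    rw [hE0, Finset.card_image_of_injOn ?inj, Finset.card_powersetCard,
      Finset.card_erase_of_mem (mem_univ v), Finset.card_univ, Fintype.card_fin]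
    case inj =>
      intro A hA B hB hAB
      rw [Finset.mem_coe, Finset.mem_powersetCard] at hA hB
      have hvA : v ∉ A := fun h => (Finset.mem_erase.mp (hA.1 h)).1 rfl
      have hvB : v ∉ B := fun h => (Finset.mem_erase.mp (hB.1 h)).1 rfl
      rw [← Finset.erase_insert hvA, ← Finset.erase_insert hvB, hAB]
  obtain ⟨E, hEsub, hEcard⟩ := Finset.exists_subset_card_eq (s := E0) (n := s) (by rw [hE0card]; exact hns)
  obtain ⟨T, hTle, hTcard, hTsum⟩ := hs.1.2 (E.val.map c)
    (by rw [Multiset.card_map]; exact hEcard)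
  obtain ⟨U, hUle, hUm⟩ := exists_le_map c E.val T hTle
  have hUnodup : U.Nodup := Multiset.nodup_of_le hUle E.nodup
  refine ⟨v, ⟨U, hUnodup⟩, ?_, ?_, ?_⟩
  · show Multiset.card U = m
    rw [← hTcard, ← hUm, Multiset.card_map]
  · intro e he
    have hmem : e ∈ E.val := Multiset.mem_of_le hUle he
    exact hE0mem e (hEsub hmem)
  · show (U.map c).sum = 0
    rw [hUm, hTsum]

lemma lower {G : Type*} [AddCommGroup G] {r m s N : ℕ} (hr : 2 ≤ r)
    (hs : IsEGZConst G m s) (hrN : r ∣ N) (hNpos : 0 < N) (ht : (N-1).choose (r-1) < s) :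
    ∃ c : Finset (Fin N) → G, ¬ HasZeroSumIntersecting G r m N c := by
  classical
  have htpos : 0 < (N-1).choose (r-1) := Nat.choose_pos (by
    have : r ≤ N := Nat.le_of_dvd hNpos hrN
    omega)
  have hs2 : 2 ≤ s := by omega
  have hnot : ¬ ((0 < s - 1) ∧ ∀ S : Multiset G, Multiset.card S = s - 1 →
      ∃ T, T ≤ S ∧ Multiset.card T = m ∧ T.sum = 0) := by
    intro hmem
    have := hs.2 hmem
    omega
  push_neg at hnot
  obtain ⟨S0, hS0card, hS0⟩ := hnot (by omega)
  set L := S0.toList with hLdef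
  have hLlen : L.length = s - 1 := by rw [hLdef, Multiset.length_toList, hS0card]
  obtain ⟨φ, hφ⟩ := ZSRB.baranyai (show 0 < r by omega) hNpos hrN
  have htlen : (N-1).choose (r-1) ≤ L.length := by omega
  refine ⟨fun e => L.get (Fin.castLE htlen (φ e)), ?_⟩
  rintro ⟨F, hFcard, hFr, hFint, hFsum⟩
  have h1 : (F.val.map (fun e => Fin.castLE htlen (φ e))).Nodup := by
    apply Multiset.Nodup.map_on ?_ F.nodup
    intro e he f hf hEq
    by_contra hne
    have h2 := hφ e f (hFr e he) (hFr f hf) hne (Fin.castLE_injective htlen hEq)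
    obtain ⟨y, hy⟩ := hFint e he f hf
    rw [h2] at hy
    exact absurd hy (Finset.notMem_empty y)
  have h3 : (F.val.map (fun e => Fin.castLE htlen (φ e)))
      ≤ (univ : Finset (Fin L.length)).val := by
    rw [Multiset.le_iff_subset h1]
    intro a _
    exact Finset.mem_univ a
  have h4 := Multiset.map_le_map (f := L.get) h3
  have h5 : (univ : Finset (Fin L.length)).val.map L.get = (L : Multiset G) := by
    rw [Fin.univ_val_map, List.ofFn_get]
  have hTle : F.val.map (fun e => L.get (Fin.castLE htlen (φ e))) ≤ S0 := by
    have h6 : F.val.map (fun e => L.get (Fin.castLE htlen (φ e)))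
        = (F.val.map (fun e => Fin.castLE htlen (φ e))).map L.get := by
      rw [Multiset.map_map]
      rfl
    rw [h6]
    calc (F.val.map (fun e => Fin.castLE htlen (φ e))).map L.get
        ≤ (univ : Finset (Fin L.length)).val.map L.get := h4
      _ = (L : Multiset G) := h5
      _ = S0 := Multiset.coe_toList S0
  refine hS0 (F.val.map (fun e => L.get (Fin.castLE htlen (φ e)))) hTle ?_ ?_
  · rw [Multiset.card_map]
    exact hFcard
  · exact hFsum

end ZSRB

/-- If `r ∣ n - 1` where `n = Ω(s_m(G))`, then
`R(I_m^{(r)}, G) = R(S_m^{(r)}, G) = n`. -/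
theorem stmt_10 (G : Type*) [AddCommGroup G] [Fintype G] (r m s n RI RS : ℕ)
    (hr : 2 ≤ r) (hm : 0 < m) (hexp : AddMonoid.exponent G ∣ m)
    (hs : IsEGZConst G m s)
    (hn : IsLeast {n : ℕ | 0 < n ∧ s ≤ (n - 1).choose (r - 1)} n)
    (hdvd : r ∣ n - 1)
    (hRI : IsIntRamsey G r m RI) (hRS : IsStarRamsey G r m RS) :
    RI = n ∧ RS = n := by
  classical
  have hn0 : 0 < n := hn.1.1
  have hns : s ≤ (n - 1).choose (r - 1) := hn.1.2
  have hs0 : 0 < s := hs.1.1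
  have hn2 : 2 ≤ n := by
    by_contra h
    have hn1 : n = 1 := by omega
    rw [hn1] at hns
    rw [show (1:ℕ) - 1 = 0 from rfl, Nat.choose_eq_zero_of_lt (by omega)] at hns
    omega
  have hNpos : 0 < n - 1 := by omega
  have ht : (n - 1 - 1).choose (r - 1) < s := by
    by_contra hle
    push_neg at hle
    have h2 := hn.2 (show (n-1) ∈ {n : ℕ | 0 < n ∧ s ≤ (n - 1).choose (r - 1)} from ⟨hNpos, hle⟩)
    omega
  -- membership of n
  have hnstar : 0 < n ∧ ∀ c : Finset (Fin n) → G, HasZeroSumStar G r m n c :=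
    ⟨hn0, fun c => ZSRB.upper hr hs hn0 hns c⟩
  have hnint : 0 < n ∧ ∀ c : Finset (Fin n) → G, HasZeroSumIntersecting G r m n c :=
    ⟨hn0, fun c => ZSRB.star_to_int (hnstar.2 c)⟩
  -- bad coloring on n - 1 vertices
  obtain ⟨c', hc'⟩ := ZSRB.lower (G := G) (m := m) hr hs hdvd hNpos ht
  have hlow : ∀ d : ℕ, (0 < d ∧ ∀ c : Finset (Fin d) → G, HasZeroSumIntersecting G r m d c)
      → n ≤ d := by
    intro d hd
    by_contra hlt
    push_neg at hlt
    have hdn : d ≤ n - 1 := by omega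
    set ι : Fin d ↪ Fin (n - 1) := Fin.castLEEmb hdn with hι
    obtain ⟨F, hFc, hFr, hFi, hFs⟩ := hd.2 (fun e => c' (e.map ι))
    apply hc'
    refine ⟨F.image (fun e => e.map ι), ?_, ?_, ?_, ?_⟩
    · rw [Finset.card_image_of_injective _ (fun a b h => Finset.map_injective ι h), hFc]
    · intro e he
      obtain ⟨a, ha, rfl⟩ := Finset.mem_image.mp he
      rw [Finset.card_map]
      exact hFr a ha
    · intro e he f hf
      obtain ⟨a, ha, rfl⟩ := Finset.mem_image.mp he
      obtain ⟨b, hb, rfl⟩ := Finset.mem_image.mp hf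
      rw [← Finset.map_inter]
      exact (hFi a ha b hb).map
    · rw [Finset.sum_image (fun a _ b _ h => Finset.map_injective ι h)]
      exact hFs
  have hIleast : IsLeast {d : ℕ | 0 < d ∧ ∀ c : Finset (Fin d) → G,
      HasZeroSumIntersecting G r m d c} n := ⟨hnint, hlow⟩
  have hSleast : IsLeast {d : ℕ | 0 < d ∧ ∀ c : Finset (Fin d) → G,
      HasZeroSumStar G r m d c} n :=
    ⟨hnstar, fun d hd => hlow d ⟨hd.1, fun c => ZSRB.star_to_int (hd.2 c)⟩⟩
  exact ⟨hRI.unique hIleast, hRS.unique hSleast⟩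
end

section
/- Let G be a finite abelian group and m a positive multiple of exp(G). Then s_m(G) ≤ R(K_{1,m}, G) ≤ s_m(G) + 1, where R(K_{1,m}, G) is the smallest d such that every G-coloring of the edges of the complete graph K_d contains a star with m edges whose edge-colors sum to zero. Moreover, if s_m(G) is even then R(K_{1,m}, G) = s_m(G) + 1. -/
open Finset

/-- Extract a sub-multiset from a `≤ map`. -/
lemma aux_exists_of_le_map {α β : Type*} [DecidableEq α] [DecidableEq β] (f : α → β)
    (t : Multiset β) : ∀ s : Multiset α, t ≤ s.map f → ∃ u, u ≤ s ∧ u.map f = t := by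
  induction t using Multiset.induction with
  | empty => exact fun s _ => ⟨0, Multiset.zero_le _, rfl⟩
  | cons b t IH =>
    intro s h
    have hb : b ∈ s.map f := Multiset.mem_of_le h (Multiset.mem_cons_self _ _)
    obtain ⟨a, ha, rfl⟩ := Multiset.mem_map.1 hb
    have hid : (s.map f).erase (f a) = (s.erase a).map f := by
      conv_lhs => rw [← Multiset.cons_erase ha]
      rw [Multiset.map_cons, Multiset.erase_cons_head]
    have h2 : t ≤ (s.erase a).map f := by
      have h3 := Multiset.erase_le_erase (f a) h
      rwa [Multiset.erase_cons_head, hid] at h3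
    obtain ⟨u, hu, hmap⟩ := IH _ h2
    refine ⟨a ::ₘ u, ?_, by rw [Multiset.map_cons, hmap]⟩
    calc a ::ₘ u ≤ a ::ₘ s.erase a := Multiset.cons_le_cons _ hu
    _ = s := Multiset.cons_erase ha

/-- Pull back an injective-on-`F` family of indices to a zero-sum subsequence. -/
lemma aux_pull {G : Type*} [AddCommGroup G] {α : Type*} [DecidableEq α] (l : List G)
    (F : Finset α) (φ : α → Fin l.length) (hinj : Set.InjOn φ F) :
    ∃ T : Multiset G, T ≤ ↑l ∧ Multiset.card T = F.card ∧
      T.sum = ∑ e ∈ F, l.get (φ e) := by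
  refine ⟨(F.image φ).val.map l.get, ?_, ?_, ?_⟩
  · have h1 : (F.image φ).val ≤ (Finset.univ : Finset (Fin l.length)).val :=
      Finset.val_le_iff.2 (Finset.subset_univ _)
    refine le_of_le_of_eq (Multiset.map_le_map h1) ?_
    rw [Fin.univ_val_map, List.ofFn_get]
  · rw [Multiset.card_map]; exact Finset.card_image_of_injOn hinj
  · show ∑ x ∈ F.image φ, l.get x = _
    exact Finset.sum_image fun x hx y hy h => hinj hx hy h

lemma aux_star_pair {d : ℕ} {v : Fin d} {e : Finset (Fin d)} (h2 : e.card = 2) (hv : v ∈ e) :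
    ∃ u, u ≠ v ∧ e = {v, u} := by
  obtain ⟨a, b, hab, rfl⟩ := Finset.card_eq_two.1 h2
  rcases Finset.mem_insert.1 hv with rfl | hb
  · exact ⟨b, hab.symm, rfl⟩
  · rw [Finset.mem_singleton] at hb
    subst hb
    exact ⟨a, hab, Finset.pair_comm a v⟩

/-- `s_m(G) ≤ R(K_{1,m}, G) ≤ s_m(G) + 1`, with equality `R = s_m(G) + 1` if
`s_m(G)` is even. -/
theorem stmt_11 (G : Type*) [AddCommGroup G] [Fintype G] (m s R : ℕ)
    (hm : 0 < m) (hexp : AddMonoid.exponent G ∣ m)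
    (hs : IsEGZConst G m s) (hR : IsStarRamsey G 2 m R) :
    s ≤ R ∧ R ≤ s + 1 ∧ (Even s → R = s + 1) := by
  classical
  have hRmem := hR.1
  -- Part 1 : s ≤ R
  have h1 : s ≤ R := by
    apply hs.2
    refine ⟨hRmem.1, ?_⟩
    intro S hcard
    obtain ⟨l, hl⟩ : ∃ l : List G, (↑l : Multiset G) = S := ⟨S.toList, S.coe_toList⟩
    have hlen : l.length = R := by rw [← Multiset.coe_card, hl, hcard]
    subst hlen
    obtain ⟨v, F, hFcard, hFmem, hFsum⟩ :=
      hRmem.2 (fun e : Finset (Fin l.length) => ∑ i ∈ e, l.get i)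
    set φ : Finset (Fin l.length) → Fin l.length := fun e =>
      if h : ∃ u, u ≠ v ∧ e = {v, u} then h.choose else v with hφd
    have hφspec : ∀ e ∈ F, φ e ≠ v ∧ e = {v, φ e} := by
      intro e he
      have h : ∃ u, u ≠ v ∧ e = {v, u} :=
        aux_star_pair (hFmem e he).1 (hFmem e he).2
      rw [hφd]
      simp only [dif_pos h]
      exact h.choose_spec
    have hφne : ∀ e ∈ F, φ e ≠ v := fun e he => (hφspec e he).1
    have hφeq : ∀ e ∈ F, e = {v, φ e} := fun e he => (hφspec e he).2
    have hinj : Set.InjOn φ F := fun e he f hf h => by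
      rw [hφeq e he, hφeq f hf, h]
    obtain ⟨T, hTle, hTcard, hTsum⟩ := aux_pull l F φ hinj
    refine ⟨T, hl ▸ hTle, by rw [hTcard, hFcard], ?_⟩
    have hmv : m • l.get v = 0 :=
      AddMonoid.exponent_dvd_iff_forall_nsmul_eq_zero.1 hexp (l.get v)
    have hstep : ∀ e ∈ F, (∑ i ∈ e, l.get i) = l.get v + l.get (φ e) := by
      intro e he
      conv_lhs => rw [hφeq e he]
      rw [Finset.sum_pair (Ne.symm (hφne e he))]
    have hsplit : ∑ e ∈ F, (∑ i ∈ e, l.get i) = F.card • l.get v + ∑ e ∈ F, l.get (φ e) := by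
      rw [Finset.sum_congr rfl hstep, Finset.sum_add_distrib, Finset.sum_const]
    rw [hsplit, hFcard, hmv, zero_add] at hFsum
    rw [hTsum, hFsum]
  -- Part 2 : R ≤ s + 1
  have h2 : R ≤ s + 1 := by
    apply hR.2
    refine ⟨Nat.succ_pos s, ?_⟩
    intro c
    set v : Fin (s + 1) := ⟨0, Nat.succ_pos s⟩ with hvdef
    set A : Finset (Fin (s + 1)) := Finset.univ.erase v with hAdef
    have hA : A.card = s := by
      rw [hAdef, Finset.card_erase_of_mem (Finset.mem_univ v), Finset.card_univ,
        Fintype.card_fin]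
      omega
    have hScard : Multiset.card (A.val.map fun u => c {v, u}) = s := by
      rw [Multiset.card_map]; exact hA
    obtain ⟨T, hTle, hTcard, hTsum⟩ := hs.1.2 _ hScard
    obtain ⟨u, hu_le, hu_map⟩ := aux_exists_of_le_map _ T A.val hTle
    have hnodup : u.Nodup := Multiset.nodup_of_le hu_le A.nodup
    set U : Finset (Fin (s + 1)) := ⟨u, hnodup⟩ with hUdef
    have hUsub : U ⊆ A := Finset.val_le_iff.1 hu_le
    have hne : ∀ x ∈ U, x ≠ v := fun x hx => Finset.ne_of_mem_erase (hUsub hx)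
    have hpinj : ∀ x ∈ U, ∀ y ∈ U, ({v, x} : Finset (Fin (s+1))) = {v, y} → x = y := by
      intro x hx y hy h
      have hxmem : x ∈ ({v, y} : Finset (Fin (s+1))) := by
        rw [← h]; exact Finset.mem_insert_of_mem (Finset.mem_singleton_self x)
      rcases Finset.mem_insert.1 hxmem with h' | h'
      · exact absurd h' (hne x hx)
      · exact Finset.mem_singleton.1 h'
    refine ⟨v, U.image fun x => ({v, x} : Finset (Fin (s+1))), ?_, ?_, ?_⟩
    · rw [Finset.card_image_of_injOn hpinj]
      have : U.card = Multiset.card T := by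
        rw [← hu_map, Multiset.card_map]; rfl
      rw [this, hTcard]
    · intro e he
      obtain ⟨x, hx, rfl⟩ := Finset.mem_image.1 he
      exact ⟨Finset.card_pair (Ne.symm (hne x hx)), Finset.mem_insert_self _ _⟩
    · rw [Finset.sum_image hpinj]
      have : ∑ x ∈ U, c {v, x} = (u.map fun w => c {v, w}).sum := rfl
      rw [this, hu_map, hTsum]
  -- Part 3
  refine ⟨h1, h2, ?_⟩
  intro hEven
  rcases Nat.lt_or_ge R (s + 1) with hlt | hge
  swap
  · omega
  have hRs : R = s := by omega
  have hprop : ∀ c : Finset (Fin s) → G, HasZeroSumStar G 2 m s c := hRs ▸ hRmem.2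
  have hs2 : 2 ≤ s := by
    rcases hEven with ⟨k, hk⟩
    have := hs.1.1
    omega
  have hnot : ¬(0 < s - 1 ∧ ∀ S : Multiset G, Multiset.card S = s - 1 →
      ∃ T, T ≤ S ∧ Multiset.card T = m ∧ T.sum = 0) := by
    intro h
    have := hs.2 h
    omega
  push_neg at hnot
  obtain ⟨S₀, hS₀card, hS₀⟩ := hnot (by omega)
  exfalso
  obtain ⟨l, hl⟩ : ∃ l : List G, (↑l : Multiset G) = S₀ := ⟨S₀.toList, S₀.coe_toList⟩
  have hlen : l.length = s - 1 := by rw [← Multiset.coe_card, hl, hS₀card]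
  set n := l.length with hn
  haveI : NeZero n := ⟨by omega⟩
  have hodd : Odd n := by
    rcases hEven with ⟨k, hk⟩
    exact ⟨k - 1, by omega⟩
  set vinf : Fin s := ⟨n, by omega⟩ with hvinf
  have hvn : vinf.val = n := rfl
  set ι : Fin s → ZMod n := fun i => (i.val : ZMod n) with hι
  set χ : Finset (Fin s) → ZMod n :=
    fun e => if vinf ∈ e then 2 * ∑ i ∈ e.erase vinf, ι i else ∑ i ∈ e, ι i with hχdef
  set φ : Finset (Fin s) → Fin n := fun e => ⟨(χ e).val, ZMod.val_lt _⟩ with hφdef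
  obtain ⟨v, F, hFcard, hFmem, hFsum⟩ := hprop fun e => l.get (φ e)
  have hιinj : ∀ i j : Fin s, i ≠ vinf → j ≠ vinf → ι i = ι j → i = j := by
    intro i j hi hj h
    have hi' : i.val < n := by
      have h1 := i.isLt
      rcases Nat.lt_or_ge i.val n with h' | h'
      · exact h'
      · have hlt := i.isLt
        exact absurd (Fin.ext (by omega) : i = vinf) hi
    have hj' : j.val < n := by
      have h1 := j.isLt
      rcases Nat.lt_or_ge j.val n with h' | h'
      · exact h'
      · have hlt := j.isLt
        exact absurd (Fin.ext (by omega) : j = vinf) hj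
    have h2 := congrArg ZMod.val h
    rw [hι] at h2
    simp only [ZMod.val_cast_of_lt hi', ZMod.val_cast_of_lt hj'] at h2
    exact Fin.ext h2
  have h2unit : IsUnit (2 : ZMod n) := by
    have h2c : ((2 : ℕ) : ZMod n) = 2 := by push_cast; ring
    rw [← h2c, ZMod.isUnit_iff_coprime]
    exact Nat.coprime_two_left.2 hodd
  have hχ : ∀ x y : Fin s, x ≠ y →
      χ {x, y} = if x = vinf then 2 * ι y else if y = vinf then 2 * ι x
        else ι x + ι y := by
    intro x y hxy
    by_cases hx : x = vinf
    · subst hx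
      rw [if_pos rfl]
      simp only [hχdef]
      have hmem : vinf ∈ ({vinf, y} : Finset (Fin s)) := Finset.mem_insert_self _ _
      rw [if_pos hmem]
      have : ({vinf, y} : Finset (Fin s)).erase vinf = {y} := by
        rw [Finset.erase_insert]
        simpa using hxy
      rw [this, Finset.sum_singleton]
    · rw [if_neg hx]
      by_cases hy : y = vinf
      · subst hy
        rw [if_pos rfl]
        simp only [hχdef]
        have hmem : vinf ∈ ({x, vinf} : Finset (Fin s)) :=
          Finset.mem_insert_of_mem (Finset.mem_singleton_self _)
        rw [if_pos hmem]
        have : ({x, vinf} : Finset (Fin s)).erase vinf = {x} := by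
          rw [Finset.erase_insert_of_ne hx, Finset.erase_singleton]
          rfl
        rw [this, Finset.sum_singleton]
      · rw [if_neg hy]
        simp only [hχdef]
        have hmem : vinf ∉ ({x, y} : Finset (Fin s)) := by
          simp only [Finset.mem_insert, Finset.mem_singleton]
          push_neg
          exact ⟨fun h => hx h.symm, fun h => hy h.symm⟩
        rw [if_neg hmem, Finset.sum_pair hxy]
  have hinj : Set.InjOn φ F := by
    intro e he f hf hef
    have hχef : χ e = χ f := by
      have hval : (χ e).val = (χ f).val := congrArg Fin.val hef
      exact ZMod.val_injective n hval
    obtain ⟨a, hav, hae⟩ := aux_star_pair (hFmem e he).1 (hFmem e he).2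
    obtain ⟨b, hbv, hbe⟩ := aux_star_pair (hFmem f hf).1 (hFmem f hf).2
    rw [hae, hbe, hχ v a (Ne.symm hav), hχ v b (Ne.symm hbv)] at hχef
    suffices hab : a = b by rw [hae, hbe, hab]
    by_cases hv : v = vinf
    · rw [if_pos hv, if_pos hv] at hχef
      have ha' : a ≠ vinf := fun h => hav (h.trans hv.symm)
      have hb' : b ≠ vinf := fun h => hbv (h.trans hv.symm)
      exact hιinj a b ha' hb' (h2unit.mul_right_injective hχef)
    · rw [if_neg hv, if_neg hv] at hχef
      by_cases ha : a = vinf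
      · by_cases hb : b = vinf
        · rw [ha, hb]
        · rw [if_pos ha, if_neg hb, two_mul] at hχef
          exact absurd (hιinj v b hv hb (add_left_cancel hχef)).symm hbv
      · by_cases hb : b = vinf
        · rw [if_neg ha, if_pos hb, two_mul] at hχef
          exact absurd (hιinj v a hv ha (add_left_cancel hχef.symm)).symm hav
        · rw [if_neg ha, if_neg hb] at hχef
          exact hιinj a b ha hb (add_left_cancel hχef)
  obtain ⟨T, hTle, hTcard, hTsum⟩ := aux_pull l F φ hinj
  refine hS₀ T (hl ▸ hTle) (by rw [hTcard, hFcard]) ?_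
  rw [hTsum]
  exact hFsum
end
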